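/- arXiv:0803.3365 — 6 statements merged into one kernel-verified Lean document; each statement's English description precedes it below -/
import Mathlib

section
/- Let V be a finite-dimensional vector space over a field of characteristic zero equipped with a finite direct sum decomposition V = ⊕_{n∈ℤ} V_n. For a ∈ ℤ let 𝔭_a = {X ∈ End(V) : X(V_n) ⊆ V_{n+a} for all n}, so that End(V) = ⊕_a 𝔭_a and [𝔭_a, 𝔭_b] ⊆ 𝔭_{a+b}. Let N ∈ 𝔭_{−1} and let Γ ∈ ⊕_{a≤−1} 𝔭_a (so Γ is nilpotent and e^{Γ} is defined). If e^{−Γ} N e^{Γ} ∈ 𝔭_{−1}, then [Γ, N] = 0; equivalently, e^{−Γ} N e^{Γ} = N. -/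
/-- For a direct sum decomposition `V = ⊕ₙ Vdec n`, the subspace
`𝔭_a = {X ∈ End(V) : X (Vdec n) ⊆ Vdec (n + a) for all n}` of `End(V)`. -/
def weightPart {k V : Type*} [Field k] [AddCommGroup V] [Module k V]
    (Vdec : ℤ → Submodule k V) (a : ℤ) : Submodule k (Module.End k V) where
  carrier := {X | ∀ n : ℤ, ∀ v ∈ Vdec n, X v ∈ Vdec (n + a)}
  add_mem' := by
    intro X Y hX hY n v hv
    simpa using (Vdec (n + a)).add_mem (hX n v hv) (hY n v hv)
  zero_mem' := by
    intro n v _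
    simpa using (Vdec (n + a)).zero_mem
  smul_mem' := by
    intro c X hX n v hv
    simpa using (Vdec (n + a)).smul_mem c (hX n v hv)

/-- The exponential of a nilpotent endomorphism of a finite-dimensional space in
characteristic zero, written as the (finite) sum `Σ_{j ≤ dim V} X^j / j!`. -/
noncomputable def expEnd {k V : Type*} [Field k] [AddCommGroup V] [Module k V]
    [FiniteDimensional k V] (X : Module.End k V) : Module.End k V :=
  ∑ j ∈ Finset.range (Module.finrank k V + 1), ((j.factorial : k))⁻¹ • X ^ j

namespace ZeroLociAux

open Finset Module

variable {k V : Type*} [Field k] [AddCommGroup V] [Module k V]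

/-- sup of the weight spaces of weight `≤ m`. -/
def lowSup (Vdec : ℤ → Submodule k V) (m : ℤ) : Submodule k V := ⨆ b ∈ Set.Iic m, Vdec b

variable (Vdec : ℤ → Submodule k V)

lemma Vdec_le_lowSup {n m : ℤ} (h : n ≤ m) : Vdec n ≤ lowSup Vdec m :=
  le_biSup _ h

lemma lowSup_mono {m m' : ℤ} (h : m ≤ m') : lowSup Vdec m ≤ lowSup Vdec m' :=
  biSup_mono fun b hb => le_trans hb h

/-- The decreasing filtration `Fil a = {X | X (Vdec n) ⊆ ⨆_{b ≤ n+a} Vdec b}`. -/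
def Fil (a : ℤ) : Submodule k (Module.End k V) where
  carrier := {X | ∀ n : ℤ, ∀ v ∈ Vdec n, X v ∈ lowSup Vdec (n + a)}
  add_mem' := by
    intro X Y hX hY n v hv
    simpa using (lowSup Vdec (n + a)).add_mem (hX n v hv) (hY n v hv)
  zero_mem' := by
    intro n v _
    simpa using (lowSup Vdec (n + a)).zero_mem
  smul_mem' := by
    intro c X hX n v hv
    simpa using (lowSup Vdec (n + a)).smul_mem c (hX n v hv)

lemma Fil_mono {a a' : ℤ} (h : a ≤ a') : Fil Vdec a ≤ Fil Vdec a' :=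
  fun _X hX n v hv => lowSup_mono Vdec (by omega) (hX n v hv)

lemma weightPart_le_Fil {a a' : ℤ} (h : a ≤ a') : weightPart Vdec a ≤ Fil Vdec a' :=
  fun _X hX n v hv => Vdec_le_lowSup Vdec (by omega) (hX n v hv)

lemma Fil_apply_lowSup {X : Module.End k V} {a : ℤ} (hX : X ∈ Fil Vdec a) {m : ℤ} {v : V}
    (hv : v ∈ lowSup Vdec m) : X v ∈ lowSup Vdec (m + a) := by
  refine Submodule.iSup_induction (motive := fun v => X v ∈ lowSup Vdec (m + a)) _ hv ?_ ?_ ?_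
  · intro i x hx
    by_cases hi : i ∈ Set.Iic m
    · rw [iSup_pos hi] at hx
      exact lowSup_mono Vdec (by simp only [Set.mem_Iic] at hi; omega) (hX i x hx)
    · rw [iSup_neg hi] at hx
      simp only [Submodule.mem_bot] at hx
      simp [hx]
  · simp
  · intro x y hx hy
    rw [map_add]
    exact add_mem hx hy

lemma mul_mem_Fil {X Y : Module.End k V} {a b : ℤ} (hX : X ∈ Fil Vdec a)
    (hY : Y ∈ Fil Vdec b) : X * Y ∈ Fil Vdec (a + b) := by
  intro n v hv
  have h := Fil_apply_lowSup Vdec hX (hY n v hv)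
  have : n + b + a = n + (a + b) := by ring
  rw [this] at h
  exact h

lemma one_mem_Fil : (1 : Module.End k V) ∈ Fil Vdec 0 := by
  intro n v hv
  simpa using Vdec_le_lowSup Vdec le_rfl hv

lemma pow_mem_Fil {X : Module.End k V} (hX : X ∈ Fil Vdec (-1)) (j : ℕ) :
    X ^ j ∈ Fil Vdec (-(j : ℤ)) := by
  induction j with
  | zero => simpa using one_mem_Fil Vdec
  | succ j ih =>
    have h := mul_mem_Fil Vdec ih hX
    rw [← pow_succ] at h
    have : (-(j : ℤ)) + -1 = -((j + 1 : ℕ) : ℤ) := by push_cast; ring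
    rwa [this] at h

lemma eq_zero_of_vanish (hinternal : DirectSum.IsInternal Vdec) {X : Module.End k V}
    (h : ∀ n : ℤ, ∀ v ∈ Vdec n, X v = 0) : X = 0 := by
  ext v
  have hv : v ∈ ⨆ n, Vdec n := by
    rw [hinternal.submodule_iSup_eq_top]; trivial
  simp only [LinearMap.zero_apply]
  refine Submodule.iSup_induction (motive := fun v => X v = 0) _ hv h (map_zero X) ?_
  intro x y hx hy
  rw [map_add, hx, hy, add_zero]

lemma eq_zero_of_weightPart_inter_Fil (hinternal : DirectSum.IsInternal Vdec) {a : ℤ}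
    {X : Module.End k V} (h1 : X ∈ weightPart Vdec a) (h2 : X ∈ Fil Vdec (a - 1)) :
    X = 0 := by
  apply eq_zero_of_vanish Vdec hinternal
  intro n v hv
  have hx1 : X v ∈ Vdec (n + a) := h1 n v hv
  have hx2 : X v ∈ lowSup Vdec (n + a - 1) := by
    have h := h2 n v hv
    have : n + (a - 1) = n + a - 1 := by ring
    rwa [this] at h
  have hdisj : Disjoint (Vdec (n + a)) (lowSup Vdec (n + a - 1)) :=
    (hinternal.submodule_iSupIndep).disjoint_biSup (by simp)
  exact Submodule.disjoint_def.mp hdisj _ hx1 hx2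

lemma Fil_eq_zero (hinternal : DirectSum.IsInternal Vdec) {lo hi : ℤ}
    (hlo : ∀ b : ℤ, b < lo → Vdec b = ⊥) (hhi : ∀ n : ℤ, hi < n → Vdec n = ⊥)
    {a : ℤ} (ha : a ≤ lo - hi - 1) {X : Module.End k V} (hX : X ∈ Fil Vdec a) : X = 0 := by
  apply eq_zero_of_vanish Vdec hinternal
  intro n v hv
  by_cases hn : n ≤ hi
  · have h1 : X v ∈ lowSup Vdec (n + a) := hX n v hv
    have hbot : lowSup Vdec (n + a) = ⊥ := by
      apply le_bot_iff.mp
      apply iSup_le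
      intro b
      apply iSup_le
      intro hb
      simp only [Set.mem_Iic] at hb
      rw [hlo b (by omega)]
    rw [hbot] at h1
    simpa using h1
  · rw [hhi n (by omega)] at hv
    simp only [Submodule.mem_bot] at hv
    simp [hv]

lemma exists_decomp {Γ : Module.End k V}
    (hΓ : Γ ∈ ⨆ a ∈ Set.Iic (-1 : ℤ), weightPart Vdec a) :
    ∃ (T : Finset ℤ) (f : ℤ → Module.End k V),
      (∀ b, f b ∈ weightPart Vdec b) ∧ (∀ b ∈ T, b ≤ -1) ∧ (∀ b ∉ T, f b = 0) ∧
      Γ = ∑ b ∈ T, f b := by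
  refine Submodule.iSup_induction
    (motive := fun Γ => ∃ (T : Finset ℤ) (f : ℤ → Module.End k V),
      (∀ b, f b ∈ weightPart Vdec b) ∧ (∀ b ∈ T, b ≤ -1) ∧ (∀ b ∉ T, f b = 0) ∧
      Γ = ∑ b ∈ T, f b) _ hΓ ?_ ?_ ?_
  · intro a X hX
    by_cases ha : a ∈ Set.Iic (-1 : ℤ)
    · rw [iSup_pos ha] at hX
      refine ⟨{a}, fun b => if b = a then X else 0, ?_, ?_, ?_, ?_⟩
      · intro b
        by_cases hb : b = a
        · subst hb; simpa using hX
        · simp [hb]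
      · intro b hb
        simp only [mem_singleton] at hb
        subst hb
        simpa using ha
      · intro b hb
        simp only [mem_singleton] at hb
        simp [hb]
      · simp
    · rw [iSup_neg ha] at hX
      simp only [Submodule.mem_bot] at hX
      exact ⟨∅, 0, fun b => zero_mem _, by simp, by simp, by simp [hX]⟩
  · exact ⟨∅, 0, fun b => zero_mem _, by simp, by simp, by simp⟩
  · rintro x y ⟨T₁, f₁, hf₁, hT₁, hz₁, rfl⟩ ⟨T₂, f₂, hf₂, hT₂, hz₂, rfl⟩
    refine ⟨T₁ ∪ T₂, f₁ + f₂, fun b => add_mem (hf₁ b) (hf₂ b), ?_, ?_, ?_⟩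
    · intro b hb
      rcases mem_union.mp hb with h | h
      · exact hT₁ b h
      · exact hT₂ b h
    · intro b hb
      simp only [mem_union, not_or] at hb
      simp [hz₁ b hb.1, hz₂ b hb.2]
    · have e1 : ∑ b ∈ T₁, f₁ b = ∑ b ∈ T₁ ∪ T₂, f₁ b :=
        Finset.sum_subset subset_union_left (fun b _ hb => hz₁ b hb)
      have e2 : ∑ b ∈ T₂, f₂ b = ∑ b ∈ T₁ ∪ T₂, f₂ b :=
        Finset.sum_subset subset_union_right (fun b _ hb => hz₂ b hb)
      rw [e1, e2, ← Finset.sum_add_distrib]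
      rfl

end ZeroLociAux

namespace ZeroLociAux

open Finset Module

variable {k V : Type*} [Field k] [CharZero k] [AddCommGroup V] [Module k V]
  [FiniteDimensional k V]

lemma alt_coeff {m : ℕ} (hm : m ≠ 0) :
    ∑ i ∈ Finset.range (m + 1),
      ((-1 : k) ^ i * (((i.factorial : k))⁻¹ * ((((m - i).factorial : ℕ) : k))⁻¹)) = 0 := by
  have hfac : (m.factorial : k) ≠ 0 := Nat.cast_ne_zero.mpr m.factorial_ne_zero
  have key : (m.factorial : k) *
      (∑ i ∈ Finset.range (m + 1),
        ((-1 : k) ^ i * (((i.factorial : k))⁻¹ * ((((m - i).factorial : ℕ) : k))⁻¹))) = 0 := by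
    rw [Finset.mul_sum]
    have hterm : ∀ i ∈ Finset.range (m + 1),
        (m.factorial : k) * ((-1 : k) ^ i * (((i.factorial : k))⁻¹ * ((((m - i).factorial : ℕ) : k))⁻¹))
          = (-1 : k) ^ i * (m.choose i : k) := by
      intro i hi
      have hle : i ≤ m := Nat.lt_succ_iff.mp (mem_range.mp hi)
      have h := Nat.choose_mul_factorial_mul_factorial hle
      have h2 : ((m.choose i : k)) * (i.factorial : k) * (((m - i).factorial : ℕ) : k)
          = (m.factorial : k) := by exact_mod_cast congrArg (fun n : ℕ => (n : k)) h
      have hi0 : (i.factorial : k) ≠ 0 := Nat.cast_ne_zero.mpr i.factorial_ne_zero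
      have hi1 : ((((m - i).factorial : ℕ)) : k) ≠ 0 := Nat.cast_ne_zero.mpr (m - i).factorial_ne_zero
      field_simp
      linear_combination (-1 : k) * h2
    rw [Finset.sum_congr rfl hterm]
    have hint := Int.alternating_sum_range_choose_of_ne hm
    have : ∑ i ∈ Finset.range (m + 1), (-1 : k) ^ i * (m.choose i : k)
        = ((∑ i ∈ Finset.range (m + 1), (-1 : ℤ) ^ i * (m.choose i : ℤ) : ℤ) : k) := by
      push_cast
      ring
    rw [this, hint]
    simp
  exact (mul_eq_zero.mp key).resolve_left hfac

lemma expEnd_neg_mul_expEnd (X : Module.End k V)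
    (hX : X ^ (Module.finrank k V + 1) = 0) : expEnd (-X) * expEnd X = 1 := by
  set R := Module.finrank k V with hR
  have hpow : ∀ m : ℕ, R + 1 ≤ m → X ^ m = 0 := fun m hm => pow_eq_zero_of_le hm hX
  set g : ℕ → ℕ → Module.End k V :=
    fun i j => ((-1 : k) ^ i * (((i.factorial : k))⁻¹ * ((j.factorial : k))⁻¹)) • X ^ (i + j)
    with hg
  have key : ∀ i j : ℕ, (((i.factorial : k))⁻¹ • (-X) ^ i) * (((j.factorial : k))⁻¹ • X ^ j)
      = g i j := by
    intro i j
    have hneg : (-X) = (-1 : k) • X := by simp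
    rw [hneg, smul_pow, smul_smul, smul_mul_smul_comm, ← pow_add, hg]
    congr 1
    ring
  have expand : expEnd (-X) * expEnd X
      = ∑ i ∈ Finset.range (R + 1), ∑ j ∈ Finset.range (R + 1), g i j := by
    rw [expEnd, expEnd, Finset.sum_mul_sum]
    exact Finset.sum_congr rfl fun i _ => Finset.sum_congr rfl fun j _ => key i j
  rw [expand]
  have step1 : ∑ i ∈ Finset.range (R + 1), ∑ j ∈ Finset.range (R + 1), g i j
      = ∑ i ∈ Finset.range (R + 1), ∑ j ∈ Finset.range (R + 1 - i), g i j := by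
    refine Finset.sum_congr rfl fun i hi => ?_
    refine (Finset.sum_subset (Finset.range_subset_range.mpr (by omega)) ?_).symm
    intro j hj hj'
    simp only [mem_range] at hi hj hj'
    have : R + 1 ≤ i + j := by omega
    simp [hg, hpow _ this]
  rw [step1, ← Finset.sum_range_diag_flip (R + 1) g]
  have inner : ∀ m ∈ Finset.range (R + 1),
      ∑ i ∈ Finset.range (m + 1), g i (m - i)
        = if m = 0 then 1 else 0 := by
    intro m _
    have hsum : ∑ i ∈ Finset.range (m + 1), g i (m - i)
        = (∑ i ∈ Finset.range (m + 1),
            ((-1 : k) ^ i * (((i.factorial : k))⁻¹ * ((((m - i).factorial : ℕ) : k))⁻¹))) • X ^ m := by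
      rw [Finset.sum_smul]
      refine Finset.sum_congr rfl fun i hi => ?_
      have hle : i ≤ m := Nat.lt_succ_iff.mp (mem_range.mp hi)
      have : i + (m - i) = m := by omega
      rw [hg]
      simp only [this]
    rw [hsum]
    by_cases hm : m = 0
    · subst hm
      simp
    · rw [if_neg hm, alt_coeff hm, zero_smul]
  rw [Finset.sum_congr rfl inner]
  rw [Finset.sum_ite_eq' (Finset.range (R + 1)) 0 (fun _ => (1 : Module.End k V))]
  simp

lemma expEnd_mul_expEnd_neg (X : Module.End k V)
    (hX : X ^ (Module.finrank k V + 1) = 0) : expEnd X * expEnd (-X) = 1 := by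
  have h : (-X) ^ (Module.finrank k V + 1) = 0 := by
    rw [neg_pow, hX, mul_zero]
  have := expEnd_neg_mul_expEnd (-X) h
  rwa [neg_neg] at this

end ZeroLociAux

namespace ZeroLociAux

open Finset Module

variable {k V : Type*} [Field k] [CharZero k] [AddCommGroup V] [Module k V]
  [FiniteDimensional k V] (Vdec : ℤ → Submodule k V)

lemma expEnd_sub_one_eq (X : Module.End k V) :
    expEnd X - 1 = ∑ i ∈ Finset.range (Module.finrank k V),
      ((((i + 1).factorial : k))⁻¹ • X ^ (i + 1)) := by
  rw [expEnd, Finset.sum_range_succ']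
  simp

lemma expEnd_sub_one_mem {X : Module.End k V} (hX : X ∈ Fil Vdec (-1)) :
    expEnd X - 1 ∈ Fil Vdec (-1) := by
  rw [expEnd_sub_one_eq]
  refine Submodule.sum_mem _ fun i _ => Submodule.smul_mem _ _ ?_
  exact Fil_mono Vdec (by omega) (pow_mem_Fil Vdec hX (i + 1))

lemma pow_sub_pow_mem {a : ℤ} {X Y : Module.End k V} (hX : X ∈ Fil Vdec (-1))
    (hY : Y ∈ Fil Vdec (-1)) (hXY : X - Y ∈ Fil Vdec a) (j : ℕ) :
    X ^ (j + 1) - Y ^ (j + 1) ∈ Fil Vdec (a - j) := by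
  induction j with
  | zero => simpa using hXY
  | succ j ih =>
    have h1 : (X ^ (j + 1) - Y ^ (j + 1)) * X ∈ Fil Vdec (a - j + -1) :=
      mul_mem_Fil Vdec ih hX
    have h2 : Y ^ (j + 1) * (X - Y) ∈ Fil Vdec (-((j + 1 : ℕ) : ℤ) + a) :=
      mul_mem_Fil Vdec (pow_mem_Fil Vdec hY (j + 1)) hXY
    have h2' : Y ^ (j + 1) * (X - Y) ∈ Fil Vdec (a - j + -1) := by
      have : (-((j + 1 : ℕ) : ℤ) + a) = a - j + -1 := by push_cast; ring
      rwa [this] at h2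
    have h3 := add_mem h1 h2'
    have heq : (X ^ (j + 1) - Y ^ (j + 1)) * X + Y ^ (j + 1) * (X - Y)
        = X ^ (j + 1 + 1) - Y ^ (j + 1 + 1) := by
      rw [pow_succ, pow_succ]
      noncomm_ring
    rw [heq] at h3
    have : a - j + -1 = a - ((j + 1 : ℕ) : ℤ) := by push_cast; ring
    rwa [this] at h3

lemma expEnd_sub_expEnd_mem (hR : 1 ≤ Module.finrank k V) {a : ℤ} {X Y : Module.End k V}
    (hX : X ∈ Fil Vdec (-1)) (hY : Y ∈ Fil Vdec (-1)) (hXY : X - Y ∈ Fil Vdec a) :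
    expEnd X - expEnd Y - (X - Y) ∈ Fil Vdec (a - 1) := by
  have hrw : expEnd X - expEnd Y - (X - Y)
      = ∑ i ∈ Finset.range (Module.finrank k V),
          ((((i + 1).factorial : k))⁻¹ • (X ^ (i + 1) - Y ^ (i + 1))) - (X - Y) := by
    have e1 := expEnd_sub_one_eq (k := k) (V := V) X
    have e2 := expEnd_sub_one_eq (k := k) (V := V) Y
    have : expEnd X - expEnd Y = (expEnd X - 1) - (expEnd Y - 1) := by abel
    rw [this, e1, e2, ← Finset.sum_sub_distrib]
    congr 1
    refine Finset.sum_congr rfl fun i _ => ?_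
    rw [smul_sub]
  rw [hrw]
  obtain ⟨R', hR'⟩ : ∃ R', Module.finrank k V = R' + 1 := ⟨Module.finrank k V - 1, by omega⟩
  rw [hR', Finset.sum_range_succ']
  simp only [Nat.factorial_one, Nat.cast_one, inv_one, one_smul, zero_add, pow_one]
  have hcancel : ∑ i ∈ Finset.range R',
        ((((i + 1 + 1).factorial : k))⁻¹ • (X ^ (i + 1 + 1) - Y ^ (i + 1 + 1))) + (X - Y) - (X - Y)
      = ∑ i ∈ Finset.range R',
        ((((i + 1 + 1).factorial : k))⁻¹ • (X ^ (i + 1 + 1) - Y ^ (i + 1 + 1))) := by abel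
  rw [hcancel]
  refine Submodule.sum_mem _ fun i _ => Submodule.smul_mem _ _ ?_
  have := pow_sub_pow_mem Vdec hX hY hXY (i + 1)
  exact Fil_mono Vdec (by push_cast; omega) this

end ZeroLociAux

namespace ZeroLociAux

open Finset Module

variable {k V : Type*} [Field k] [AddCommGroup V] [Module k V]

lemma mul_mem_weightPart (Vdec : ℤ → Submodule k V) {X Y : Module.End k V} {a b : ℤ}
    (hX : X ∈ weightPart Vdec a) (hY : Y ∈ weightPart Vdec b) :
    X * Y ∈ weightPart Vdec (a + b) := by
  intro n v hv
  have h := hX (n + b) (Y v) (hY n v hv)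
  have : n + b + a = n + (a + b) := by ring
  rwa [this] at h

end ZeroLociAux


open ZeroLociAux Finset Module

/-- if `N ∈ 𝔭₋₁` and `Γ ∈ ⊕_{a ≤ -1} 𝔭_a` satisfy
`e^{-Γ} N e^{Γ} ∈ 𝔭₋₁`, then `[Γ, N] = 0`; equivalently `e^{-Γ} N e^{Γ} = N`. -/
theorem zero_loci_stmt2 {k V : Type*} [Field k] [CharZero k] [AddCommGroup V] [Module k V]
    [FiniteDimensional k V]
    (Vdec : ℤ → Submodule k V) (hinternal : DirectSum.IsInternal Vdec)
    (hfin : {n : ℤ | Vdec n ≠ ⊥}.Finite)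
    (N Γ : Module.End k V)
    (hN : N ∈ weightPart Vdec (-1))
    (hΓ : Γ ∈ ⨆ a ∈ Set.Iic (-1 : ℤ), weightPart Vdec a)
    (hconj : expEnd (-Γ) * N * expEnd Γ ∈ weightPart Vdec (-1)) :
    Γ * N - N * Γ = 0 ∧ expEnd (-Γ) * N * expEnd Γ = N := by
  classical
  rcases subsingleton_or_nontrivial V with hV | hV
  · exact ⟨Subsingleton.elim _ _, Subsingleton.elim _ _⟩
  have hR : 1 ≤ Module.finrank k V := Module.finrank_pos
  -- bounds on the set of nonzero weights
  set F : Finset ℤ := hfin.toFinset with hF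
  have hFne : F.Nonempty := by
    rw [hF, Set.Finite.toFinset_nonempty]
    by_contra hS
    rw [Set.not_nonempty_iff_eq_empty] at hS
    have hall : ∀ n : ℤ, Vdec n = ⊥ := by
      intro n
      by_contra h
      have hmem : n ∈ {n : ℤ | Vdec n ≠ ⊥} := h
      rw [hS] at hmem
      exact hmem
    obtain ⟨v, hv⟩ := exists_ne (0 : V)
    have hvtop : v ∈ ⨆ n, Vdec n := by rw [hinternal.submodule_iSup_eq_top]; trivial
    rw [iSup_eq_bot.mpr hall] at hvtop
    exact hv (Submodule.mem_bot _ |>.mp hvtop)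
  set lo : ℤ := F.min' hFne with hlodef
  set hi : ℤ := F.max' hFne with hhidef
  have hmemF : ∀ b : ℤ, Vdec b ≠ ⊥ → b ∈ F := fun b hb => hfin.mem_toFinset.mpr hb
  have hlo : ∀ b : ℤ, b < lo → Vdec b = ⊥ := by
    intro b hb
    by_contra h
    have := F.min'_le b (hmemF b h)
    omega
  have hhi : ∀ n : ℤ, hi < n → Vdec n = ⊥ := by
    intro n hn
    by_contra h
    have := F.le_max' n (hmemF n h)
    omega
  -- Γ is in the filtration
  have hΓFil : Γ ∈ Fil Vdec (-1) := by
    have hle : (⨆ a ∈ Set.Iic (-1 : ℤ), weightPart Vdec a) ≤ Fil Vdec (-1) :=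
      iSup_le fun a => iSup_le fun ha => weightPart_le_Fil Vdec (Set.mem_Iic.mp ha)
    exact hle hΓ
  have hNfil : N ∈ Fil Vdec (-1) := weightPart_le_Fil Vdec le_rfl hN
  -- nilpotency
  have hDineq : -(((hi - lo + 1).toNat + 1 : ℕ) : ℤ) ≤ lo - hi - 1 := by
    have := Int.self_le_toNat (hi - lo + 1)
    push_cast
    omega
  have hD0 : Γ ^ ((hi - lo + 1).toNat + 1) = 0 :=
    Fil_eq_zero Vdec hinternal hlo hhi hDineq (pow_mem_Fil Vdec hΓFil _)
  have hnil : IsNilpotent Γ := ⟨_, hD0⟩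
  have hfr : Γ ^ (Module.finrank k V) = 0 := by
    have hch := hnil.charpoly_eq_X_pow_finrank
    have h := LinearMap.aeval_self_charpoly Γ
    rw [hch] at h
    simpa using h
  have hΓpow : Γ ^ (Module.finrank k V + 1) = 0 := by rw [pow_succ, hfr, zero_mul]
  -- conjugate minus N lies in Fil (-2)
  have hA : expEnd (-Γ) - 1 ∈ Fil Vdec (-1) := expEnd_sub_one_mem Vdec (neg_mem hΓFil)
  have hB : expEnd Γ - 1 ∈ Fil Vdec (-1) := expEnd_sub_one_mem Vdec hΓFil
  have hCN : expEnd (-Γ) * N * expEnd Γ - N ∈ Fil Vdec (-2) := by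
    have hexp : expEnd (-Γ) * N * expEnd Γ - N
        = (expEnd (-Γ) - 1) * N + N * (expEnd Γ - 1)
          + (expEnd (-Γ) - 1) * N * (expEnd Γ - 1) := by noncomm_ring
    rw [hexp]
    have h1 : (expEnd (-Γ) - 1) * N ∈ Fil Vdec (-2) := by
      have := mul_mem_Fil Vdec hA hNfil
      norm_num at this
      exact this
    have h2 : N * (expEnd Γ - 1) ∈ Fil Vdec (-2) := by
      have := mul_mem_Fil Vdec hNfil hB
      norm_num at this
      exact this
    have h3 : (expEnd (-Γ) - 1) * N * (expEnd Γ - 1) ∈ Fil Vdec (-2) := by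
      have := mul_mem_Fil Vdec (mul_mem_Fil Vdec hA hNfil) hB
      exact Fil_mono Vdec (by norm_num) this
    exact add_mem (add_mem h1 h2) h3
  -- conjugation fixes N
  have hC : expEnd (-Γ) * N * expEnd Γ = N := by
    have h0 : expEnd (-Γ) * N * expEnd Γ - N = 0 := by
      refine eq_zero_of_weightPart_inter_Fil Vdec hinternal (a := -1) (sub_mem hconj hN) ?_
      have : (-1 : ℤ) - 1 = -2 := by norm_num
      rw [this]
      exact hCN
    exact sub_eq_zero.mp h0
  -- N commutes with expEnd Γ
  have hcomm : N * expEnd Γ = expEnd Γ * N := by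
    have h1 : expEnd Γ * (expEnd (-Γ) * N * expEnd Γ) = expEnd Γ * N := by rw [hC]
    have h2 : expEnd Γ * (expEnd (-Γ) * N * expEnd Γ)
        = (expEnd Γ * expEnd (-Γ)) * N * expEnd Γ := by noncomm_ring
    rw [h2, expEnd_mul_expEnd_neg Γ hΓpow, one_mul] at h1
    exact h1
  -- decompose Γ into graded pieces
  obtain ⟨T, f, hf, hT, hz, hsum⟩ := exists_decomp Vdec hΓ
  -- downward induction on the weights
  have main : ∀ c : ℕ, ∀ a ∈ T, (T.filter (fun b => a < b)).card ≤ c → N * f a = f a * N := by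
    intro c
    induction c using Nat.strong_induction_on with
    | _ c ih =>
      intro a ha hcard
      have hIH : ∀ b ∈ T, a < b → N * f b = f b * N := by
        intro b hb hab
        have hsub : T.filter (fun x => b < x) ⊂ T.filter (fun x => a < x) := by
          have hss : T.filter (fun x => b < x) ⊆ T.filter (fun x => a < x) := by
            intro x hx
            simp only [Finset.mem_filter] at hx ⊢
            exact ⟨hx.1, by omega⟩
          refine (Finset.ssubset_iff_of_subset hss).mpr
            ⟨b, Finset.mem_filter.mpr ⟨hb, hab⟩, ?_⟩
          simp
        have hlt : (T.filter (fun x => b < x)).card < c :=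
          lt_of_lt_of_le (Finset.card_lt_card hsub) hcard
        exact ih _ hlt b hb le_rfl
      set Xa : Module.End k V := ∑ b ∈ T.filter (fun b => a < b), f b with hXa
      have hcommXa : Commute N Xa := by
        refine Commute.sum_right _ _ _ fun b hb => ?_
        have hb' := Finset.mem_filter.mp hb
        exact hIH b hb'.1 hb'.2
      have hXaFil : Xa ∈ Fil Vdec (-1) := Submodule.sum_mem _ fun b hb =>
        weightPart_le_Fil Vdec (hT b (Finset.mem_filter.mp hb).1) (hf b)
      have hYa : Γ - Xa = ∑ b ∈ T.filter (fun b => ¬ a < b), f b := by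
        rw [hsum, hXa, ← Finset.sum_filter_add_sum_filter_not T (fun b => a < b) f]
        abel
      have hYaFil : Γ - Xa ∈ Fil Vdec a := by
        rw [hYa]
        refine Submodule.sum_mem _ fun b hb => ?_
        have hb' := Finset.mem_filter.mp hb
        exact weightPart_le_Fil Vdec (by omega : b ≤ a) (hf b)
      have hDmem := expEnd_sub_expEnd_mem Vdec hR hΓFil hXaFil hYaFil
      set D : Module.End k V := expEnd Γ - expEnd Xa - (Γ - Xa) with hDdef
      have hcommexp : Commute N (expEnd Xa) := by
        rw [expEnd]
        exact Commute.sum_right _ _ _ fun j _ => (hcommXa.pow_right j).smul_right _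
      have hkey : N * (Γ - Xa) - (Γ - Xa) * N
          = (N * expEnd Γ - expEnd Γ * N) - (N * expEnd Xa - expEnd Xa * N)
            - (N * D - D * N) := by
        rw [hDdef]; noncomm_ring
      have hbr : N * (Γ - Xa) - (Γ - Xa) * N ∈ Fil Vdec (a - 2) := by
        rw [hkey, hcomm, hcommexp.eq]
        have e : expEnd Γ * N - expEnd Γ * N - (expEnd Xa * N - expEnd Xa * N)
            - (N * D - D * N) = D * N - N * D := by noncomm_ring
        rw [e]
        have h1 : D * N ∈ Fil Vdec (a - 1 + -1) := mul_mem_Fil Vdec hDmem hNfil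
        have h2 : N * D ∈ Fil Vdec (-1 + (a - 1)) := mul_mem_Fil Vdec hNfil hDmem
        have e1 : a - 1 + -1 = a - 2 := by ring
        have e2 : -1 + (a - 1) = a - 2 := by ring
        rw [e1] at h1; rw [e2] at h2
        exact sub_mem h1 h2
      have hsplit : Γ - Xa = f a + ∑ b ∈ T.filter (fun b => b < a), f b := by
        rw [hYa]
        have hins : T.filter (fun b => ¬ a < b) = insert a (T.filter (fun b => b < a)) := by
          ext x
          simp only [Finset.mem_filter, Finset.mem_insert, not_lt]
          constructor
          · rintro ⟨hxT, hxa⟩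
            rcases eq_or_lt_of_le hxa with h | h
            · exact Or.inl h
            · exact Or.inr ⟨hxT, h⟩
          · rintro (rfl | ⟨hxT, hxa⟩)
            · exact ⟨ha, le_rfl⟩
            · exact ⟨hxT, le_of_lt hxa⟩
        rw [hins, Finset.sum_insert (by simp)]
      set Ya : Module.End k V := ∑ b ∈ T.filter (fun b => b < a), f b with hYadef
      have hYaFil' : Ya ∈ Fil Vdec (a - 1) := Submodule.sum_mem _ fun b hb =>
        weightPart_le_Fil Vdec
          (by have := (Finset.mem_filter.mp hb).2; omega : b ≤ a - 1) (hf b)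
      have hfaFil : N * f a - f a * N ∈ Fil Vdec (a - 2) := by
        have heq : N * f a - f a * N
            = (N * (Γ - Xa) - (Γ - Xa) * N) - (N * Ya - Ya * N) := by
          rw [hsplit, hYadef]; noncomm_ring
        rw [heq]
        have h1 : N * Ya ∈ Fil Vdec (-1 + (a - 1)) := mul_mem_Fil Vdec hNfil hYaFil'
        have h2 : Ya * N ∈ Fil Vdec (a - 1 + -1) := mul_mem_Fil Vdec hYaFil' hNfil
        have e1 : -1 + (a - 1) = a - 2 := by ring
        have e2 : a - 1 + -1 = a - 2 := by ring
        rw [e1] at h1; rw [e2] at h2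
        exact sub_mem hbr (sub_mem h1 h2)
      have hfaWP : N * f a - f a * N ∈ weightPart Vdec (a - 1) := by
        have h1 : N * f a ∈ weightPart Vdec (-1 + a) := mul_mem_weightPart Vdec hN (hf a)
        have h2 : f a * N ∈ weightPart Vdec (a + -1) := mul_mem_weightPart Vdec (hf a) hN
        have e1 : -1 + a = a - 1 := by ring
        have e2 : a + -1 = a - 1 := by ring
        rw [e1] at h1; rw [e2] at h2
        exact sub_mem h1 h2
      have hzero : N * f a - f a * N = 0 := by
        refine eq_zero_of_weightPart_inter_Fil Vdec hinternal (a := a - 1) hfaWP ?_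
        have : a - 1 - 1 = a - 2 := by ring
        rw [this]
        exact hfaFil
      exact sub_eq_zero.mp hzero
  have hall : ∀ b ∈ T, N * f b = f b * N := fun b hb => main _ b hb le_rfl
  constructor
  · rw [hsum, Finset.sum_mul, Finset.mul_sum, ← Finset.sum_sub_distrib]
    refine Finset.sum_eq_zero fun b hb => ?_
    rw [sub_eq_zero]
    exact (hall b hb).symm
  · exact hC
end

section
/- Let V be a finite-dimensional vector space over a field k of characteristic zero, W a finite increasing filtration of V, N a nilpotent endomorphism with N(W_i) ⊆ W_i for all i, and Y_M a grading of a finite increasing filtration M with Y_M(W_i) ⊆ W_i and [Y_M, N] = −2N. Let Y be a grading of W with [Y, Y_M] = 0 such that, writing N = N_0 + N_{−1} + N_{−2} + ⋯ with [Y, N_{−j}] = −j N_{−j}, the pair (N_0, H = Y_M − Y) is an sl2-pair with associated sl2-triple (N_0, H, N_0^+) and [N − N_0, N_0^+] = 0. Then for every k ≥ 1 one has [N_0^+, N_{−k}] = 0 and [H, N_{−k}] = (k−2) N_{−k}; that is, N_{−k} is either zero or a highest weight vector of weight k−2 for the adjoint action of the sl2-triple. In particular N_{−1} = 0. -/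
/-- A finite increasing filtration of `V` indexed by `ℤ`. -/
def FinIncrFil {k V : Type*} [Field k] [AddCommGroup V] [Module k V]
    (L : ℤ → Submodule k V) : Prop :=
  Monotone L ∧ (∃ a : ℤ, L a = ⊥) ∧ (∃ b : ℤ, L b = ⊤)

/-- A grading of an increasing filtration `L`: a semisimple endomorphism with integer
eigenvalues such that `L i = E_i(Y) ⊕ L (i-1)` for all `i`. -/
def IsGrading {k V : Type*} [Field k] [AddCommGroup V] [Module k V]
    (L : ℤ → Submodule k V) (Y : Module.End k V) : Prop :=
  (⨆ i : ℤ, Y.eigenspace (i : k)) = ⊤ ∧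
    ∀ i : ℤ, L i = Y.eigenspace (i : k) ⊔ L (i - 1) ∧
      Disjoint (Y.eigenspace (i : k)) (L (i - 1))

/-- Elements of distinct eigenspaces of a linear map summing to zero are all zero. -/
lemma eigen_sum_zero {k M : Type*} [Field k] [AddCommGroup M] [Module k M]
    (T : M →ₗ[k] M) (s : Finset ℕ) (μ : ℕ → k) (Z : ℕ → M)
    (hinj : ∀ i ∈ s, ∀ j ∈ s, μ i = μ j → i = j)
    (hZ : ∀ j ∈ s, T (Z j) = μ j • Z j)
    (h0 : ∑ j ∈ s, Z j = 0) : ∀ j ∈ s, Z j = 0 := by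
  induction s using Finset.strongInduction generalizing μ Z with
  | _ s ih =>
    intro j hj
    have herase : ∀ i ∈ s.erase j, (μ i - μ j) • Z i = 0 := by
      refine ih (s.erase j) (Finset.erase_ssubset hj) μ (fun i => (μ i - μ j) • Z i) ?_ ?_ ?_
      · intro a ha b hb hab
        exact hinj a (Finset.mem_of_mem_erase ha) b (Finset.mem_of_mem_erase hb) hab
      · intro i hi
        rw [map_smul, hZ i (Finset.mem_of_mem_erase hi), smul_comm]
      · have h2 : T (∑ i ∈ s, Z i) = ∑ i ∈ s, μ i • Z i := by
          rw [map_sum]; exact Finset.sum_congr rfl hZ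
        rw [h0, map_zero] at h2
        have h1 : ∑ i ∈ s, (μ i - μ j) • Z i = 0 := by
          calc ∑ i ∈ s, (μ i - μ j) • Z i
              = ∑ i ∈ s, (μ i • Z i - μ j • Z i) := by
                refine Finset.sum_congr rfl fun i _ => ?_; rw [sub_smul]
            _ = (∑ i ∈ s, μ i • Z i) - μ j • ∑ i ∈ s, Z i := by
                rw [Finset.sum_sub_distrib, Finset.smul_sum]
            _ = 0 := by rw [← h2, h0, smul_zero, sub_zero]
        rw [Finset.sum_erase s (show (μ j - μ j) • Z j = 0 by simp)]
        exact h1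
    have hz' : ∀ i ∈ s.erase j, Z i = 0 := by
      intro i hi
      have hne : μ i - μ j ≠ 0 := by
        intro h
        exact (Finset.ne_of_mem_erase hi)
          (hinj i (Finset.mem_of_mem_erase hi) j hj (sub_eq_zero.mp h))
      rcases smul_eq_zero.mp (herase i hi) with h | h
      · exact absurd h hne
      · exact h
    have h3 := Finset.add_sum_erase s Z hj
    rw [Finset.sum_eq_zero hz', add_zero, h0] at h3
    exact h3

/-- in the setting of Deligne's lemma, for every `k ≥ 1` the component
`N₋ₖ` satisfies `[N₀⁺, N₋ₖ] = 0` and `[H, N₋ₖ] = (k-2) N₋ₖ`, i.e. it is zero or a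
highest weight vector of weight `k-2` for the `sl₂`-triple `(N₀, H, N₀⁺)`.
In particular `N₋₁ = 0`. -/
theorem zero_loci_stmt4 {k V : Type*} [Field k] [CharZero k] [AddCommGroup V] [Module k V]
    [FiniteDimensional k V]
    (W M : ℤ → Submodule k V) (hW : FinIncrFil W) (hMfil : FinIncrFil M)
    (N : Module.End k V) (hnil : IsNilpotent N) (hNW : ∀ i : ℤ, ∀ v ∈ W i, N v ∈ W i)
    (Y_M : Module.End k V) (hYM : IsGrading M Y_M)
    (hYMW : ∀ i : ℤ, ∀ v ∈ W i, Y_M v ∈ W i)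
    (hYMN : Y_M * N - N * Y_M = (-2 : k) • N)
    (Y : Module.End k V) (hY : IsGrading W Y) (hYYM : Y * Y_M = Y_M * Y)
    (n : ℕ) (C : ℕ → Module.End k V) (Nplus : Module.End k V)
    (hdec : N = ∑ j ∈ Finset.range n, C j) (hvan : ∀ j : ℕ, n ≤ j → C j = 0)
    (heig : ∀ j : ℕ, Y * C j - C j * Y = (-(j : k)) • C j)
    (hsl1 : (Y_M - Y) * C 0 - C 0 * (Y_M - Y) = (-2 : k) • C 0)
    (hsl2 : (Y_M - Y) * Nplus - Nplus * (Y_M - Y) = (2 : k) • Nplus)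
    (hsl3 : Nplus * C 0 - C 0 * Nplus = Y_M - Y)
    (hb : (N - C 0) * Nplus - Nplus * (N - C 0) = 0) :
    (∀ j : ℕ, 1 ≤ j →
      Nplus * C j - C j * Nplus = 0 ∧
      (Y_M - Y) * C j - C j * (Y_M - Y) = (((j : ℤ) - 2 : ℤ) : k) • C j) ∧
    C 1 = 0 := by
  letI : LieRing (Module.End k V) := LieRing.ofAssociativeRing
  have hYC : ∀ j : ℕ, ⁅Y, C j⁆ = (-(j : k)) • C j := by
    intro j; rw [Ring.lie_def]; exact heig j
  have hYYM0 : ⁅Y, Y_M⁆ = 0 := by rw [Ring.lie_def, hYYM, sub_self]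
  -- Step A: [Y_M, C j] = -2 • C j
  have hYMC : ∀ j ∈ Finset.range n, ⁅Y_M, C j⁆ = (-2 : k) • C j := by
    have key := eigen_sum_zero (LieAlgebra.ad k (Module.End k V) Y)
      (Finset.range n) (fun j => -(j : k))
      (fun j => ⁅Y_M, C j⁆ + (2 : k) • C j) ?_ ?_ ?_
    · intro j hj
      have h := key j hj
      rw [add_eq_zero_iff_eq_neg] at h
      rw [h, neg_smul, ← neg_smul]
    · intro a _ b _ hab
      have h : -(a : k) = -(b : k) := hab
      exact Nat.cast_injective (neg_injective h)
    · intro i _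
      rw [LieAlgebra.ad_apply, lie_add, lie_smul, hYC, leibniz_lie, hYYM0, zero_lie, zero_add,
        hYC, lie_smul]
      module
    · have hsum : ∑ j ∈ Finset.range n, (⁅Y_M, C j⁆ + (2 : k) • C j)
          = ⁅Y_M, N⁆ + (2 : k) • N := by
        rw [Finset.sum_add_distrib, ← Finset.smul_sum, ← hdec]
        congr 1
        rw [hdec]
        simp only [← LieAlgebra.ad_apply (R := k) (L := Module.End k V) Y_M]
        rw [map_sum]
      rw [hsum, Ring.lie_def, hYMN]
      module
  -- Step B: [H, C j] = (j - 2) • C j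
  have hHC : ∀ j : ℕ, ⁅Y_M - Y, C j⁆ = ((j : k) - 2) • C j := by
    intro j
    by_cases hjn : j < n
    · rw [sub_lie, hYMC j (Finset.mem_range.mpr hjn), hYC]
      module
    · rw [hvan j (le_of_not_gt hjn)]; simp
  -- Step C: [Nplus, C j] = 0 for j ≥ 1
  have hNC : ∀ j : ℕ, 1 ≤ j → ⁅Nplus, C j⁆ = 0 := by
    have hHNp : ⁅Y_M - Y, Nplus⁆ = (2 : k) • Nplus := by rw [Ring.lie_def]; exact hsl2
    intro j hj
    by_cases hjn : j < n
    · have hn0 : 0 ∈ Finset.range n := Finset.mem_range.mpr (by omega)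
      have key := eigen_sum_zero (LieAlgebra.ad k (Module.End k V) (Y_M - Y))
        ((Finset.range n).erase 0) (fun j => (j : k))
        (fun j => ⁅Nplus, C j⁆) ?_ ?_ ?_
      · exact key j (Finset.mem_erase.mpr ⟨by omega, Finset.mem_range.mpr hjn⟩)
      · intro a _ b _ hab
        have h : (a : k) = (b : k) := hab
        exact Nat.cast_injective h
      · intro i _
        rw [LieAlgebra.ad_apply, leibniz_lie, hHNp, hHC, smul_lie, lie_smul]
        module
      · have hsum : ∑ i ∈ (Finset.range n).erase 0, ⁅Nplus, C i⁆
            = ⁅Nplus, N - C 0⁆ := by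
          have h4 := Finset.add_sum_erase (Finset.range n) C hn0
          rw [← hdec] at h4
          have h5 : ∑ i ∈ (Finset.range n).erase 0, C i = N - C 0 := by
            rw [← h4]; abel
          rw [← h5]
          simp only [← LieAlgebra.ad_apply (R := k) (L := Module.End k V) Nplus]
          rw [map_sum]
        rw [hsum, ← lie_skew, Ring.lie_def, hb, neg_zero]
    · rw [hvan j (le_of_not_gt hjn)]; simp
  refine ⟨?_, ?_⟩
  · intro j hj
    constructor
    · have := hNC j hj; rwa [Ring.lie_def] at this
    · have := hHC j; rw [Ring.lie_def] at this; rw [this]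
      congr 1
      push_cast
      ring
  · by_cases hH : Y_M - Y = 0
    · have h1 := hHC 1
      rw [hH, zero_lie] at h1
      rcases smul_eq_zero.mp h1.symm with h | h
      · exfalso; norm_num at h
      · exact h
    · have t : IsSl2Triple (Y_M - Y) Nplus (C 0) :=
        { h_ne_zero := hH
          lie_e_f := by rw [Ring.lie_def]; exact hsl3
          lie_h_e_nsmul := by
            rw [Ring.lie_def, hsl2, two_smul, two_smul]
          lie_h_f_nsmul := by
            rw [hHC 0]
            push_cast
            rw [two_smul]
            module }
      by_contra hC1
      have P : t.HasPrimitiveVectorWith (C 1) (-1 : k) :=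
        { ne_zero := hC1
          lie_h := by rw [hHC 1]; norm_num
          lie_e := hNC 1 le_rfl }
      obtain ⟨m, hm⟩ := P.exists_nat
      have hm1 : ((m : k) + 1) = 0 := by rw [← hm]; ring
      exact Nat.cast_add_one_ne_zero m (by push_cast; exact hm1)
end

section
/- Let V be a finite-dimensional vector space over a field k of characteristic zero, and let W be a finite increasing filtration of V with W_{i−1} = 0 and W_{i+1} = V for some i ∈ ℤ (so W has at most two nonzero graded quotients, in adjacent weights i and i+1). Let N be a nilpotent endomorphism with N(W_j) ⊆ W_j for all j, assume the relative weight filtration M = M(N,W) exists, and let Y_M be a grading of M with Y_M(W_j) ⊆ W_j for all j and [Y_M, N] = −2N. Let Y = Y(N,Y_M) be the unique grading of W with [Y,Y_M] = 0 satisfying Deligne's conditions (a) and (b). Then N = N_0, the ad(Y)-weight-zero component of N; in particular [Y, N] = 0. -/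
/-- `M` is the relative weight filtration of `N` and `W` (elementwise form of the
`Gr^M Gr^W` isomorphism conditions). -/
def IsRelWeightFil {k V : Type*} [Field k] [AddCommGroup V] [Module k V]
    (W M : ℤ → Submodule k V) (N : Module.End k V) : Prop :=
  FinIncrFil M ∧ (∀ i : ℤ, ∀ v ∈ M i, N v ∈ M (i - 2)) ∧
    ∀ (j : ℤ) (m : ℕ), 1 ≤ m →
      (∀ v ∈ M (j - m) ⊓ W j, ∃ u ∈ M (j + m) ⊓ W j,
        (N ^ m) u - v ∈ (M (j - m - 1) ⊓ W j) ⊔ W (j - 1)) ∧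
      (∀ u ∈ M (j + m) ⊓ W j,
        (N ^ m) u ∈ (M (j - m - 1) ⊓ W j) ⊔ W (j - 1) →
        u ∈ (M (j + m - 1) ⊓ W j) ⊔ W (j - 1))

/-- if `W` has at most two nonzero adjacent graded quotients
(`W (i-1) = 0`, `W (i+1) = V`), then for the Deligne grading `Y = Y(N, Y_M)`
(given here together with its defining data) one has `N = N₀`;
in particular `[Y, N] = 0`. -/
theorem zero_loci_stmt5 {k V : Type*} [Field k] [CharZero k] [AddCommGroup V] [Module k V]
    [FiniteDimensional k V]
    (W M : ℤ → Submodule k V) (hW : FinIncrFil W)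
    (i : ℤ) (hWbot : W (i - 1) = ⊥) (hWtop : W (i + 1) = ⊤)
    (N : Module.End k V) (hnil : IsNilpotent N) (hNW : ∀ j : ℤ, ∀ v ∈ W j, N v ∈ W j)
    (hM : IsRelWeightFil W M N)
    (Y_M : Module.End k V) (hYM : IsGrading M Y_M)
    (hYMW : ∀ j : ℤ, ∀ v ∈ W j, Y_M v ∈ W j)
    (hYMN : Y_M * N - N * Y_M = (-2 : k) • N)
    (Y : Module.End k V) (hY : IsGrading W Y) (hYYM : Y * Y_M = Y_M * Y)
    (n : ℕ) (C : ℕ → Module.End k V) (Nplus : Module.End k V)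
    (hdec : N = ∑ j ∈ Finset.range n, C j) (hvan : ∀ j : ℕ, n ≤ j → C j = 0)
    (heig : ∀ j : ℕ, Y * C j - C j * Y = (-(j : k)) • C j)
    (hsl1 : (Y_M - Y) * C 0 - C 0 * (Y_M - Y) = (-2 : k) • C 0)
    (hsl2 : (Y_M - Y) * Nplus - Nplus * (Y_M - Y) = (2 : k) • Nplus)
    (hsl3 : Nplus * C 0 - C 0 * Nplus = Y_M - Y)
    (hb : (N - C 0) * Nplus - Nplus * (N - C 0) = 0) :
    N = C 0 ∧ Y * N = N * Y := by
  obtain ⟨hWmono, -, -⟩ := hW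
  -- eigenvalues of Y other than i, i+1 are absent
  have hEsub : ∀ m : ℤ, Y.eigenspace (m : k) ≤ W m := by
    intro m
    rw [(hY.2 m).1]
    exact le_sup_left
  have hEbot : ∀ m : ℤ, m ≠ i → m ≠ i + 1 → Y.eigenspace (m : k) = ⊥ := by
    intro m h1 h2
    rcases (by omega : m ≤ i - 1 ∨ i + 2 ≤ m) with h | h
    · exact le_bot_iff.mp ((hEsub m).trans ((hWmono h).trans_eq hWbot))
    · have htp : W (m - 1) = ⊤ := eq_top_iff.mpr (hWtop ▸ hWmono (by omega))
      have := (hY.2 m).2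
      rw [htp] at this
      exact disjoint_top.mp this
  have htop : Y.eigenspace ((i : k)) ⊔ Y.eigenspace ((i : k) + 1) = ⊤ := by
    rw [eq_top_iff, ← hY.1]
    refine iSup_le fun m => ?_
    rcases eq_or_ne m i with rfl | h1
    · exact le_sup_left
    rcases eq_or_ne m (i + 1) with rfl | h2
    · refine le_sup_of_le_right (le_of_eq ?_)
      norm_num
    · rw [hEbot m h1 h2]
      exact bot_le
  -- an endomorphism vanishing on both eigenspaces is zero
  have hzero : ∀ A : Module.End k V, (∀ v ∈ Y.eigenspace ((i : k)), A v = 0) →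
      (∀ v ∈ Y.eigenspace ((i : k) + 1), A v = 0) → A = 0 := by
    intro A h1 h2
    ext v
    have hv : v ∈ (⊤ : Submodule k V) := trivial
    rw [← htop] at hv
    obtain ⟨a, ha, b, hb', rfl⟩ := Submodule.mem_sup.mp hv
    simp [h1 a ha, h2 b hb']
  -- C j shifts Y-eigenvalues down by j
  have hshift : ∀ (j : ℕ) (μ : k), ∀ v ∈ Y.eigenspace μ, C j v ∈ Y.eigenspace (μ - j) := by
    intro j μ v hv
    rw [Module.End.mem_eigenspace_iff] at hv ⊢
    have h := LinearMap.congr_fun (heig j) v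
    simp only [LinearMap.sub_apply, Module.End.mul_apply, LinearMap.smul_apply] at h
    rw [hv, map_smul] at h
    have h2 : Y (C j v) = (-(j : k)) • C j v + μ • C j v := by
      rw [← h]; abel
    rw [h2]; module
  -- C j = 0 for j ≥ 2
  have hCj0 : ∀ j : ℕ, 2 ≤ j → C j = 0 := by
    intro j hj
    refine hzero _ (fun v hv => ?_) (fun v hv => ?_)
    · have := hshift j _ v hv
      have hc : (i : k) - (j : k) = ((i - (j : ℤ) : ℤ) : k) := by push_cast; ring
      rw [hc, hEbot _ (by omega) (by omega), Submodule.mem_bot] at this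
      exact this
    · have := hshift j _ v hv
      have hc : (i : k) + 1 - (j : k) = ((i + 1 - (j : ℤ) : ℤ) : k) := by push_cast; ring
      rw [hc, hEbot _ (by omega) (by omega), Submodule.mem_bot] at this
      exact this
  -- N = C 0 + C 1
  have hN01 : N = C 0 + C 1 := by
    rw [hdec]
    have hext : ∑ j ∈ Finset.range n, C j = ∑ j ∈ Finset.range (n + 2), C j := by
      refine Finset.sum_subset (Finset.range_subset_range.mpr (by omega)) ?_
      intro j _ hj
      exact hvan j (by simpa using hj)
    rw [hext, Finset.range_eq_Ico,
      ← Finset.sum_Ico_consecutive _ (by omega : (0:ℕ) ≤ 2) (by omega : (2:ℕ) ≤ n + 2)]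
    have hzero2 : ∑ j ∈ Finset.Ico 2 (n + 2), C j = 0 :=
      Finset.sum_eq_zero fun j hj => hCj0 j (Finset.mem_Ico.mp hj).1
    rw [hzero2, add_zero, ← Finset.range_eq_Ico]
    simp [Finset.sum_range_succ]
  -- Y commutes with C 0
  have hYC0 : Y * C 0 = C 0 * Y := by
    have h := heig 0
    simpa [sub_eq_zero] using h
  -- C 0 preserves eigenspaces of Y
  have hfE : ∀ (μ : k), ∀ v ∈ Y.eigenspace μ, C 0 v ∈ Y.eigenspace μ := by
    intro μ v hv
    rw [Module.End.mem_eigenspace_iff] at hv ⊢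
    have := LinearMap.congr_fun hYC0 v
    simp only [Module.End.mul_apply] at this
    rw [this, hv, map_smul]
  -- W i is the eigenspace for i
  have hWiE : W i = Y.eigenspace ((i : k)) := by
    have h := (hY.2 i).1
    rw [hWbot] at h
    simpa using h
  have hNE : ∀ v ∈ Y.eigenspace ((i : k)), N v ∈ Y.eigenspace ((i : k)) := by
    intro v hv
    rw [← hWiE] at hv ⊢
    exact hNW i v hv
  -- C 1 kills the i-eigenspace and maps the (i+1)-eigenspace into the i-eigenspace
  have hC1E : ∀ v ∈ Y.eigenspace ((i : k)), C 1 v = 0 := by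
    intro v hv
    have := hshift 1 _ v hv
    have hc : (i : k) - (1 : ℕ) = ((i - 1 : ℤ) : k) := by push_cast; ring
    rw [hc, hEbot _ (by omega) (by omega), Submodule.mem_bot] at this
    exact this
  have hC1E' : ∀ v ∈ Y.eigenspace ((i : k) + 1), C 1 v ∈ Y.eigenspace ((i : k)) := by
    intro v hv
    have := hshift 1 _ v hv
    have hc : (i : k) + 1 - (1 : ℕ) = (i : k) := by push_cast; ring
    rwa [hc] at this
  -- C 0 is nilpotent
  obtain ⟨r, hr⟩ := hnil
  have hpow1 : ∀ m : ℕ, ∀ v ∈ Y.eigenspace ((i : k)),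
      ((C 0) ^ m) v = (N ^ m) v ∧ (N ^ m) v ∈ Y.eigenspace ((i : k)) := by
    intro m
    induction m with
    | zero => intro v hv; simp [hv]
    | succ m ih =>
      intro v hv
      have hC0v : C 0 v = N v := by
        have := LinearMap.congr_fun hN01 v
        simp only [LinearMap.add_apply] at this
        rw [this, hC1E v hv, add_zero]
      have hNv := hNE v hv
      obtain ⟨h1, h2⟩ := ih (N v) hNv
      constructor
      · rw [pow_succ (C 0), pow_succ N]
        simp only [Module.End.mul_apply]
        rw [hC0v, h1]
      · rw [pow_succ N]
        simp only [Module.End.mul_apply]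
        exact h2
  have hpow2 : ∀ m : ℕ, ∀ v ∈ Y.eigenspace ((i : k) + 1),
      ((C 0) ^ m) v ∈ Y.eigenspace ((i : k) + 1) ∧
      (N ^ m) v - ((C 0) ^ m) v ∈ Y.eigenspace ((i : k)) := by
    intro m
    induction m with
    | zero => intro v hv; simp [hv, Submodule.zero_mem]
    | succ m ih =>
      intro v hv
      obtain ⟨h1, h2⟩ := ih v hv
      have hNapp : ∀ u : V, N u = C 0 u + C 1 u := by
        intro u
        have := LinearMap.congr_fun hN01 u
        simpa using this
      have key : (N ^ (m+1)) v - ((C 0) ^ (m+1)) v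
          = C 1 (((C 0) ^ m) v) + N ((N ^ m) v - ((C 0) ^ m) v) := by
        rw [pow_succ' N, pow_succ' (C 0)]
        simp only [Module.End.mul_apply]
        rw [map_sub N, hNapp (((C 0) ^ m) v)]
        abel
      constructor
      · rw [pow_succ' (C 0)]
        simp only [Module.End.mul_apply]
        exact hfE _ _ h1
      · rw [key]
        exact Submodule.add_mem _ (hC1E' _ h1) (hNE _ h2)
  have hdisj : ∀ u : V, u ∈ Y.eigenspace ((i : k)) → u ∈ Y.eigenspace ((i : k) + 1) → u = 0 := by
    intro u h1 h2
    rw [Module.End.mem_eigenspace_iff] at h1 h2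
    have h3 : ((i : k) + 1) • u - (i : k) • u = 0 := by rw [← h2, ← h1, sub_self]
    rw [← sub_smul] at h3
    simpa using h3
  have hfnil : (C 0) ^ r = 0 := by
    refine hzero _ (fun v hv => ?_) (fun v hv => ?_)
    · rw [(hpow1 r v hv).1, hr, LinearMap.zero_apply]
    · obtain ⟨h1, h2⟩ := hpow2 r v hv
      rw [hr, LinearMap.zero_apply, zero_sub] at h2
      exact hdisj _ (by simpa using Submodule.neg_mem _ h2) h1
  -- bracket relations
  have hYMf : Y_M * C 0 - C 0 * Y_M = (-2 : k) • C 0 := by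
    have h0 : Y * C 0 - C 0 * Y = 0 := by rw [hYC0, sub_self]
    have hexp : Y_M * C 0 - C 0 * Y_M
        = ((Y_M - Y) * C 0 - C 0 * (Y_M - Y)) + (Y * C 0 - C 0 * Y) := by noncomm_ring
    rw [hexp, hsl1, h0, add_zero]
  have hYMX : Y_M * C 1 - C 1 * Y_M = (-2 : k) • C 1 := by
    have hexp : Y_M * C 1 - C 1 * Y_M
        = (Y_M * N - N * Y_M) - (Y_M * C 0 - C 0 * Y_M) := by rw [hN01]; noncomm_ring
    rw [hexp, hYMN, hYMf, hN01, smul_add]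
    abel
  have hYX : Y * C 1 - C 1 * Y = (-1 : k) • C 1 := by
    have := heig 1
    simpa using this
  have hHX : (Y_M - Y) * C 1 - C 1 * (Y_M - Y) = (-1 : k) • C 1 := by
    have hexp : (Y_M - Y) * C 1 - C 1 * (Y_M - Y)
        = (Y_M * C 1 - C 1 * Y_M) - (Y * C 1 - C 1 * Y) := by noncomm_ring
    rw [hexp, hYMX, hYX]
    module
  have heX : Nplus * C 1 - C 1 * Nplus = 0 := by
    have hXN : N - C 0 = C 1 := by rw [hN01]; abel
    rw [hXN] at hb
    have : Nplus * C 1 - C 1 * Nplus = -((C 1) * Nplus - Nplus * (C 1)) := by noncomm_ring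
    rw [this, hb, neg_zero]
  -- the sequence X_m = (ad C0)^m (C 1)
  set adf : Module.End k (Module.End k V) :=
    LinearMap.mulLeft k (C 0) - LinearMap.mulRight k (C 0) with hadf
  have hadf_apply : ∀ Z : Module.End k V, adf Z = C 0 * Z - Z * C 0 := by
    intro Z
    simp [hadf, LinearMap.sub_apply, LinearMap.mulLeft_apply, LinearMap.mulRight_apply]
  set Xs : ℕ → Module.End k V := fun m => (adf ^ m) (C 1) with hXs
  have hXs0 : Xs 0 = C 1 := by simp [hXs]
  have hXsS : ∀ m, Xs (m + 1) = C 0 * Xs m - Xs m * C 0 := by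
    intro m
    rw [hXs]
    simp only []
    rw [pow_succ', Module.End.mul_apply, hadf_apply]
  -- H-weights
  have hHseq : ∀ m : ℕ, (Y_M - Y) * Xs m - Xs m * (Y_M - Y) = (-(1 : k) - 2 * m) • Xs m := by
    intro m
    induction m with
    | zero =>
      rw [hXs0]
      simpa using hHX
    | succ m ih =>
      rw [hXsS m]
      have hexp : (Y_M - Y) * (C 0 * Xs m - Xs m * C 0) - (C 0 * Xs m - Xs m * C 0) * (Y_M - Y)
          = (((Y_M - Y) * C 0 - C 0 * (Y_M - Y)) * Xs m
            - Xs m * ((Y_M - Y) * C 0 - C 0 * (Y_M - Y)))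
            + (C 0 * ((Y_M - Y) * Xs m - Xs m * (Y_M - Y))
            - ((Y_M - Y) * Xs m - Xs m * (Y_M - Y)) * C 0) := by noncomm_ring
      rw [hexp, hsl1, ih]
      simp only [smul_mul_assoc, mul_smul_comm, Nat.cast_succ]
      module
  -- e-brackets
  have heseq : ∀ m : ℕ, Nplus * Xs (m + 1) - Xs (m + 1) * Nplus
      = (-((m : k) + 1) ^ 2) • Xs m := by
    intro m
    induction m with
    | zero =>
      rw [hXsS 0, hXs0]
      have hexp : Nplus * (C 0 * C 1 - C 1 * C 0) - (C 0 * C 1 - C 1 * C 0) * Nplus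
          = ((Nplus * C 0 - C 0 * Nplus) * C 1 - C 1 * (Nplus * C 0 - C 0 * Nplus))
            + (C 0 * (Nplus * C 1 - C 1 * Nplus) - (Nplus * C 1 - C 1 * Nplus) * C 0) := by
        noncomm_ring
      rw [hexp, hsl3, heX, hHX]
      simp only [mul_zero, zero_mul, sub_zero, add_zero, Nat.cast_zero]
      module
    | succ m ih =>
      rw [hXsS (m + 1)]
      have hexp : Nplus * (C 0 * Xs (m+1) - Xs (m+1) * C 0)
            - (C 0 * Xs (m+1) - Xs (m+1) * C 0) * Nplus
          = ((Nplus * C 0 - C 0 * Nplus) * Xs (m+1) - Xs (m+1) * (Nplus * C 0 - C 0 * Nplus))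
            + (C 0 * (Nplus * Xs (m+1) - Xs (m+1) * Nplus)
            - (Nplus * Xs (m+1) - Xs (m+1) * Nplus) * C 0) := by noncomm_ring
      rw [hexp, hsl3, hHseq (m + 1), ih, hXsS m]
      simp only [smul_mul_assoc, mul_smul_comm]
      match_scalars <;> push_cast <;> ring
  -- descent
  have hne : ∀ m : ℕ, (-((m : k) + 1) ^ 2) ≠ 0 := by
    intro m
    exact neg_ne_zero.mpr (pow_ne_zero 2 (Nat.cast_add_one_ne_zero m))
  have hdesc : ∀ m : ℕ, Xs (m + 1) = 0 → Xs m = 0 := by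
    intro m h
    have := heseq m
    rw [h, mul_zero, zero_mul, sub_self] at this
    rcases smul_eq_zero.mp this.symm with h' | h'
    · exact absurd h' (hne m)
    · exact h'
  have hallzero : ∀ d m : ℕ, Xs (m + d) = 0 → Xs m = 0 := by
    intro d
    induction d with
    | zero => intro m h; simpa using h
    | succ d ih =>
      intro m h
      have : Xs ((m + 1) + d) = 0 := by rw [show (m + 1) + d = m + (d + 1) by omega]; exact h
      exact hdesc m (ih (m + 1) this)
  have hadfnil : IsNilpotent adf := by
    refine Commute.isNilpotent_sub (LinearMap.commute_mulLeft_right (C 0) (C 0)) ⟨r, ?_⟩ ⟨r, ?_⟩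
    · rw [LinearMap.pow_mulLeft, hfnil]
      simp
    · rw [LinearMap.pow_mulRight, hfnil]
      simp
  obtain ⟨R, hR⟩ := hadfnil
  have hXR : Xs R = 0 := by
    rw [hXs]
    simp only []
    rw [hR, LinearMap.zero_apply]
  have hC1zero : C 1 = 0 := by
    rw [← hXs0]
    exact hallzero R 0 (by simpa using hXR)
  have hNC0 : N = C 0 := by rw [hN01, hC1zero, add_zero]
  refine ⟨hNC0, ?_⟩
  rw [hNC0, ← sub_eq_zero]
  have := heig 0
  simpa using this
end

section
/- Let r ≥ 1, let V be a finite-dimensional ℚ-vector space, H ⊆ V a subspace with dim_ℚ(V/H) = 1, and N_1, …, N_r pairwise commuting nilpotent endomorphisms of V with N_j(H) ⊆ H and N_j(V) = N_j(H) for all j. For A ∈ {H, V}, let (B^•(A), d) be the associated complex and IH^p(A) its cohomology. Then: (1) B^p(H) = B^p(V) for all p ≥ 1, and the induced map IH^p(H) → IH^p(V) is an isomorphism for all p ≥ 2; (2) writing K = ∩_{j=1}^r ker(N_j) ⊆ V, the sequence 0 → H ∩ K → K → V/H → IH^1(H) → IH^1(V) → 0 is exact, where the first map is the inclusion, the second is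 the restriction of the quotient map V → V/H, the third (connecting) map sends the class of v ∈ V to the class in IH^1(H) of the 1-cocycle (N_1 v, …, N_r v) ∈ B^1(H) (this is well-defined), and the last map is induced by the identity on 1-cocycles via B^1(H) = B^1(V). -/
variable {r : ℕ} {V : Type*} [AddCommGroup V] [Module ℚ V]

/-- The product `N_{j₁} ⋯ N_{jₚ}` over a subset `S = {j₁ < ⋯ < jₚ}` of the (pairwise
commuting) endomorphisms `N_j`. -/
def npow (N : Fin r → Module.End ℚ V) (hc : ∀ i j, Commute (N i) (N j))
    (S : Finset (Fin r)) : Module.End ℚ V :=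
  S.noncommProd N fun i _ j _ _ => hc i j

/-- The graded piece `B^p(A) = ⊕_{j₁ < ⋯ < jₚ} N_{j₁} ⋯ N_{jₚ}(A)` of the complex
computing local intersection cohomology, realized as the submodule of functions
`f : Finset (Fin r) → V` supported on `p`-element subsets `S` with
`f S ∈ N_{j₁} ⋯ N_{jₚ}(A)` for `S = {j₁ < ⋯ < jₚ}`. -/
def Bpiece (N : Fin r → Module.End ℚ V) (hc : ∀ i j, Commute (N i) (N j))
    (A : Submodule ℚ V) (p : ℕ) : Submodule ℚ (Finset (Fin r) → V) where
  carrier := {f | ∀ S : Finset (Fin r),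
    (S.card = p → f S ∈ A.map (npow N hc S)) ∧ (S.card ≠ p → f S = 0)}
  add_mem' := by
    intro f g hf hg S
    refine ⟨fun h => ?_, fun h => ?_⟩
    · simpa using add_mem ((hf S).1 h) ((hg S).1 h)
    · simp [Pi.add_apply, (hf S).2 h, (hg S).2 h]
  zero_mem' := fun S => ⟨fun _ => zero_mem _, fun _ => rfl⟩
  smul_mem' := by
    intro c f hf S
    refine ⟨fun h => ?_, fun h => ?_⟩
    · simpa using Submodule.smul_mem _ c ((hf S).1 h)
    · simp [Pi.smul_apply, (hf S).2 h]

/-- The differential of the complex `B^•`: on the summand indexed by omitting the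
`q`-th smallest element `j` of `T` it acts by `(-1)^{q-1} N_j`. -/
def dB (N : Fin r → Module.End ℚ V) :
    (Finset (Fin r) → V) →ₗ[ℚ] (Finset (Fin r) → V) :=
  LinearMap.pi fun T : Finset (Fin r) =>
    ∑ j ∈ T, ((-1 : ℚ) ^ (T.filter (· < j)).card) •
      ((N j).comp (LinearMap.proj (T.erase j)))

/-- The 1-cochain `(N₁ v, …, N_r v)` attached to `v`. -/
def cyc (N : Fin r → Module.End ℚ V) : V →ₗ[ℚ] (Finset (Fin r) → V) :=
  LinearMap.pi fun S : Finset (Fin r) =>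
    if S.card = 1 then ∑ j ∈ S, (N j : V →ₗ[ℚ] V) else 0

section Aux

variable (N : Fin r → Module.End ℚ V) (hc : ∀ i j, Commute (N i) (N j))

lemma npow_erase {S : Finset (Fin r)} {j : Fin r} (hj : j ∈ S) :
    npow N hc S = npow N hc (S.erase j) * N j :=
  (Finset.noncommProd_erase_mul S hj N _).symm

lemma map_npow (H : Submodule ℚ V)
    (hNV : ∀ j, Submodule.map (N j) (⊤ : Submodule ℚ V) = Submodule.map (N j) H)
    {S : Finset (Fin r)} (hS : S.Nonempty) :
    Submodule.map (npow N hc S) H = Submodule.map (npow N hc S) ⊤ := by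
  obtain ⟨j, hj⟩ := hS
  rw [npow_erase N hc hj, Module.End.mul_eq_comp, Submodule.map_comp, Submodule.map_comp,
    ← hNV j]

lemma Bpiece_mono {A B : Submodule ℚ V} (hAB : A ≤ B) (p : ℕ) :
    Bpiece N hc A p ≤ Bpiece N hc B p := by
  intro f hf S
  exact ⟨fun h => Submodule.map_mono hAB ((hf S).1 h), (hf S).2⟩

lemma mem_Bpiece {A : Submodule ℚ V} {p : ℕ} {f : Finset (Fin r) → V} :
    f ∈ Bpiece N hc A p ↔ ∀ S : Finset (Fin r),
      (S.card = p → f S ∈ A.map (npow N hc S)) ∧ (S.card ≠ p → f S = 0) :=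
  Iff.rfl

lemma Bpiece_eq (H : Submodule ℚ V)
    (hNV : ∀ j, Submodule.map (N j) (⊤ : Submodule ℚ V) = Submodule.map (N j) H)
    {p : ℕ} (hp : 1 ≤ p) : Bpiece N hc H p = Bpiece N hc ⊤ p := by
  ext f
  rw [mem_Bpiece, mem_Bpiece]
  refine forall_congr' fun S => and_congr_left fun _ => imp_congr_right fun h => ?_
  rw [map_npow N hc H hNV (Finset.card_pos.mp (by omega))]

lemma dB_apply (f : Finset (Fin r) → V) (T : Finset (Fin r)) :
    dB N f T = ∑ j ∈ T, ((-1 : ℚ) ^ (T.filter (· < j)).card) • N j (f (T.erase j)) := by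
  simp [dB]

lemma cyc_apply (v : V) (T : Finset (Fin r)) :
    cyc N v T = if T.card = 1 then ∑ j ∈ T, N j v else 0 := by
  simp only [cyc, LinearMap.pi_apply]
  split <;> simp

lemma dB_B0 {A : Submodule ℚ V} {g : Finset (Fin r) → V} (hg : g ∈ Bpiece N hc A 0) :
    dB N g = cyc N (g ∅) := by
  funext T
  rw [dB_apply, cyc_apply]
  by_cases hT : T.card = 1
  · obtain ⟨j, rfl⟩ := Finset.card_eq_one.mp hT
    simp [Finset.filter_singleton]
  · rw [if_neg hT]
    refine Finset.sum_eq_zero fun j hj => ?_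
    have h1 : 0 < T.card := Finset.card_pos.mpr ⟨j, hj⟩
    have : g (T.erase j) = 0 := (hg _).2 (by rw [Finset.card_erase_of_mem hj]; omega)
    simp [this]

lemma cyc_zero_of_ker {v : V} (hv : ∀ j, N j v = 0) : cyc N v = 0 := by
  funext T
  rw [cyc_apply]
  split
  · exact Finset.sum_eq_zero fun j _ => hv j
  · rfl

include hc in
lemma pair_sum (v : V) {a b : Fin r} (h : a < b) :
    ∑ j ∈ ({a, b} : Finset (Fin r)),
      ((-1 : ℚ) ^ ((({a, b} : Finset (Fin r)).filter (· < j)).card)) •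
        N j (cyc N v (({a, b} : Finset (Fin r)).erase j)) = 0 := by
  have hab : a ≠ b := h.ne
  have hba : ¬ b < a := not_lt.mpr h.le
  rw [Finset.sum_pair hab]
  rw [Finset.erase_insert (by simp [hab])]
  have heb : ({a, b} : Finset (Fin r)).erase b = {a} := by
    rw [Finset.pair_comm, Finset.erase_insert (by simp [hab.symm])]
  rw [heb]
  rw [cyc_apply, cyc_apply]
  simp only [Finset.card_singleton, if_pos rfl, Finset.sum_singleton]
  have hfa : (({a, b} : Finset (Fin r)).filter (· < a)) = ∅ := by
    ext x
    simp only [Finset.mem_filter, Finset.mem_insert, Finset.mem_singleton,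
      Finset.notMem_empty, iff_false]
    rintro ⟨rfl | rfl, hx⟩ <;> omega
  have hfb : (({a, b} : Finset (Fin r)).filter (· < b)) = {a} := by
    ext x
    simp only [Finset.mem_filter, Finset.mem_insert, Finset.mem_singleton]
    constructor
    · rintro ⟨rfl | rfl, hx⟩ <;> omega
    · rintro rfl; exact ⟨Or.inl rfl, h⟩
  rw [hfa, hfb]
  have hcomm : N a (N b v) = N b (N a v) := by
    rw [← Module.End.mul_apply, ← Module.End.mul_apply, (hc a b).eq]
  simp [hcomm]

include hc in
lemma dB_cyc (v : V) : dB N (cyc N v) = 0 := by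
  funext T
  rw [dB_apply]
  by_cases hT : T.card = 2
  · obtain ⟨a, b, hab, rfl⟩ := Finset.card_eq_two.mp hT
    rcases lt_or_gt_of_ne hab with h | h
    · exact pair_sum N hc v h
    · rw [Finset.pair_comm]
      exact pair_sum N hc v h
  · refine Finset.sum_eq_zero fun j hj => ?_
    have h1 : 0 < T.card := Finset.card_pos.mpr ⟨j, hj⟩
    have : cyc N v (T.erase j) = 0 := by
      rw [cyc_apply, if_neg (by rw [Finset.card_erase_of_mem hj]; omega)]
    simp [this]

lemma cyc_mem (H : Submodule ℚ V)
    (hNV : ∀ j, Submodule.map (N j) (⊤ : Submodule ℚ V) = Submodule.map (N j) H)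
    (v : V) : cyc N v ∈ Bpiece N hc H 1 := by
  intro S
  constructor
  · intro hS
    obtain ⟨j, rfl⟩ := Finset.card_eq_one.mp hS
    rw [cyc_apply]
    simp only [Finset.card_singleton, if_pos rfl, Finset.sum_singleton]
    have h1 : npow N hc {j} = N j := Finset.noncommProd_singleton j N
    rw [h1, ← hNV j]
    exact ⟨v, trivial, rfl⟩
  · intro hS
    rw [cyc_apply, if_neg hS]

/-- delta function at ∅ -/
def delta0 (v : V) : Finset (Fin r) → V := fun S => if S = ∅ then v else 0

lemma delta0_mem {A : Submodule ℚ V} {v : V} (hv : v ∈ A) :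
    delta0 v ∈ Bpiece N hc A 0 := by
  intro S
  constructor
  · intro hS
    rw [Finset.card_eq_zero] at hS
    subst hS
    have : npow N hc (∅ : Finset (Fin r)) = 1 := Finset.noncommProd_empty N _
    rw [this]
    exact ⟨v, hv, by simp [delta0]⟩
  · intro hS
    have : S ≠ ∅ := fun h => hS (by simp [h])
    simp [delta0, this]

include hc in
lemma dB_delta0 (v : V) : dB N (delta0 (r := r) v) = cyc N v := by
  rw [dB_B0 N hc (delta0_mem N hc (Submodule.mem_top (x := v)))]
  simp [delta0]

end Aux
/-- for `H ⊆ V` of codimension one and pairwise commuting nilpotent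
endomorphisms `N_j` with `N_j(H) ⊆ H` and `N_j(V) = N_j(H)`:
(1) `B^p(H) = B^p(V)` for `p ≥ 1`, and the induced map `IH^p(H) → IH^p(V)` is an
isomorphism for `p ≥ 2` (the cocycle and coboundary submodules agree);
(2) with `K = ∩ ker N_j`, the sequence
`0 → H ∩ K → K → V/H → IH¹(H) → IH¹(V) → 0` is exact, where the connecting map sends
the class of `v` to the class of the (well-defined) cocycle `(N₁ v, …, N_r v)` and the
last map is induced by the identity on 1-cocycles. -/
theorem zero_loci_stmt14 (r : ℕ) (hr : 1 ≤ r)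
    {V : Type*} [AddCommGroup V] [Module ℚ V] [FiniteDimensional ℚ V]
    (H : Submodule ℚ V) (hdim : Module.finrank ℚ (V ⧸ H) = 1)
    (N : Fin r → Module.End ℚ V) (hc : ∀ i j, Commute (N i) (N j))
    (hnil : ∀ j, IsNilpotent (N j))
    (hNH : ∀ j, ∀ v ∈ H, N j v ∈ H)
    (hNV : ∀ j, Submodule.map (N j) (⊤ : Submodule ℚ V) = Submodule.map (N j) H) :
    -- (1): B^p(H) = B^p(V) for p ≥ 1, and IH^p(H) ≅ IH^p(V) for p ≥ 2
    (∀ p : ℕ, 1 ≤ p → Bpiece N hc H p = Bpiece N hc ⊤ p) ∧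
    (∀ p : ℕ, 2 ≤ p →
      Bpiece N hc H p ⊓ LinearMap.ker (dB N) = Bpiece N hc ⊤ p ⊓ LinearMap.ker (dB N) ∧
      Submodule.map (dB N) (Bpiece N hc H (p - 1)) =
        Submodule.map (dB N) (Bpiece N hc ⊤ (p - 1))) ∧
    -- (2): exactness of 0 → H ∩ K → K → V/H → IH¹(H) → IH¹(V) → 0
    (let K : Submodule ℚ V := ⨅ j, LinearMap.ker (N j)
     -- exactness at H ∩ K: the inclusion H ∩ K → K is injective
     Function.Injective (Submodule.inclusion (inf_le_right : H ⊓ K ≤ K)) ∧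
     -- exactness at K: the kernel of K → V/H is H ∩ K
     (∀ v ∈ K, (H.mkQ v = 0 ↔ v ∈ H ⊓ K)) ∧
     -- the connecting map is well defined: (N₁ v, …, N_r v) is a cocycle in B¹(H),
     -- and for v ∈ H it is a coboundary
     (∀ v : V, cyc N v ∈ Bpiece N hc H 1 ⊓ LinearMap.ker (dB N)) ∧
     (∀ v ∈ H, cyc N v ∈ Submodule.map (dB N) (Bpiece N hc H 0)) ∧
     -- exactness at V/H: the class of v dies in IH¹(H) iff it comes from K
     (∀ v : V, cyc N v ∈ Submodule.map (dB N) (Bpiece N hc H 0) ↔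
        ∃ u ∈ K, v - u ∈ H) ∧
     -- exactness at IH¹(H): a cocycle for H bounds in B^•(V) iff it differs from a
     -- connecting cocycle by a coboundary of B^•(H)
     (∀ f ∈ Bpiece N hc H 1 ⊓ LinearMap.ker (dB N),
        (f ∈ Submodule.map (dB N) (Bpiece N hc ⊤ 0) ↔
          ∃ v : V, f - cyc N v ∈ Submodule.map (dB N) (Bpiece N hc H 0))) ∧
     -- exactness at IH¹(V): surjectivity of IH¹(H) → IH¹(V)
     (∀ f ∈ Bpiece N hc ⊤ 1 ⊓ LinearMap.ker (dB N),
        ∃ g ∈ Bpiece N hc H 1 ⊓ LinearMap.ker (dB N),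
          f - g ∈ Submodule.map (dB N) (Bpiece N hc ⊤ 0))) := by

  refine ⟨fun p hp => Bpiece_eq N hc H hNV hp, fun p hp => ?_, ?_⟩
  · exact ⟨by rw [Bpiece_eq N hc H hNV (by omega : 1 ≤ p)],
      by rw [Bpiece_eq N hc H hNV (show 1 ≤ p - 1 by omega)]⟩
  intro K
  have hK : ∀ v : V, v ∈ K ↔ ∀ j, N j v = 0 := fun v => by
    simp [K, Submodule.mem_iInf, LinearMap.mem_ker]
  refine ⟨Submodule.inclusion_injective _, ?_, ?_, ?_, ?_, ?_, ?_⟩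
  · intro v hv
    simp [Submodule.mkQ_apply, Submodule.Quotient.mk_eq_zero, Submodule.mem_inf, hv]
  · intro v
    exact Submodule.mem_inf.mpr ⟨cyc_mem N hc H hNV v, LinearMap.mem_ker.mpr (dB_cyc N hc v)⟩
  · intro v hv
    exact ⟨delta0 v, delta0_mem N hc hv, dB_delta0 N hc v⟩
  · intro v
    constructor
    · rintro ⟨g, hg, hgv⟩
      have h0 : g ∅ ∈ H := by
        obtain ⟨x, hx, hxe⟩ := (hg ∅).1 (by simp)
        have e : npow N hc (∅ : Finset (Fin r)) = 1 := Finset.noncommProd_empty N _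
        rw [e] at hxe
        simpa [← hxe] using hx
      refine ⟨v - g ∅, (hK _).mpr fun j => ?_, by simpa using h0⟩
      have hcc : cyc N v = cyc N (g ∅) := by rw [← hgv, dB_B0 N hc hg]
      have hj := congrFun hcc {j}
      rw [cyc_apply, cyc_apply] at hj
      simp only [Finset.card_singleton, if_pos rfl, Finset.sum_singleton, if_true] at hj
      rw [map_sub, hj, sub_self]
    · rintro ⟨u, hu, hh⟩
      have hcu : cyc N u = 0 := cyc_zero_of_ker N ((hK u).mp hu)
      have hcc : cyc N v = cyc N (v - u) := by rw [map_sub, hcu, sub_zero]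
      rw [hcc]
      exact ⟨delta0 (v - u), delta0_mem N hc hh, dB_delta0 N hc _⟩
  · intro f hf
    constructor
    · rintro ⟨g, hg, hgf⟩
      refine ⟨g ∅, ?_⟩
      rw [← hgf, dB_B0 N hc hg, sub_self]
      exact zero_mem _
    · rintro ⟨v, g, hg, hgv⟩
      refine ⟨g + delta0 v,
        add_mem (Bpiece_mono N hc le_top 0 hg) (delta0_mem N hc trivial), ?_⟩
      rw [map_add, dB_delta0 N hc v, hgv]
      abel
  · intro f hf
    refine ⟨f, ?_, by rw [sub_self]; exact zero_mem _⟩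
    rwa [Bpiece_eq N hc H hNV (le_refl 1)]
end

section
/- Let V be a finite-dimensional ℚ-vector space with a filtration 0 = W_{−2} ⊆ W_{−1} ⊆ W_0 = V such that dim_ℚ(V/W_{−1}) = 1, and let N be a nilpotent endomorphism of V with N(W_{−1}) ⊆ W_{−1} (note that then automatically N(V) ⊆ W_{−1}, since N induces a nilpotent, hence zero, endomorphism of the one-dimensional quotient V/W_{−1}). If the relative weight filtration M = M(N,W) exists, then N(V) = N(W_{−1}). -/
/-- for `0 = W₋₂ ⊆ W₋₁ ⊆ W₀ = V` with `dim V/W₋₁ = 1` and a nilpotent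
`N` with `N(W₋₁) ⊆ W₋₁`, the existence of the relative weight filtration `M(N, W)`
forces `N(V) = N(W₋₁)`. -/
theorem zero_loci_stmt15 {V : Type*} [AddCommGroup V] [Module ℚ V] [FiniteDimensional ℚ V]
    (H : Submodule ℚ V) (hdim : Module.finrank ℚ (V ⧸ H) = 1)
    (N : Module.End ℚ V) (hnil : IsNilpotent N) (hNH : ∀ v ∈ H, N v ∈ H)
    (W : ℤ → Submodule ℚ V)
    (hWbot : ∀ i : ℤ, i ≤ -2 → W i = ⊥) (hWH : W (-1) = H)
    (hWtop : ∀ i : ℤ, 0 ≤ i → W i = ⊤)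
    (M : ℤ → Submodule ℚ V) (hM : IsRelWeightFil W M N) :
    Submodule.map N (⊤ : Submodule ℚ V) = Submodule.map N H := by
  obtain ⟨⟨hMono, ⟨a, ha⟩, ⟨b, hb⟩⟩, hN2, hiso⟩ := hM
  -- Step 1: N maps everything into H
  have hNHall : ∀ x : V, N x ∈ H := by
    obtain ⟨K, hK⟩ := hnil
    obtain ⟨g, hg0, hgspan⟩ := finrank_eq_one_iff'.mp hdim
    obtain ⟨e, he⟩ := H.mkQ_surjective g
    obtain ⟨c, hc⟩ := hgspan (H.mkQ (N e))
    have key : ∀ t : ℕ, H.mkQ ((N ^ t) e) = c ^ t • g := by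
      intro t; induction t with
      | zero => simpa using he
      | succ t ih =>
        have h1 : (N ^ t) e - c ^ t • e ∈ H := by
          rw [← Submodule.Quotient.eq]
          show H.mkQ _ = H.mkQ _
          rw [ih, map_smul, he]
        have h2 : N ((N ^ t) e - c ^ t • e) ∈ H := hNH _ h1
        have h3 : (N ^ (t + 1)) e - c ^ t • N e ∈ H := by
          rw [map_sub, map_smul] at h2
          rwa [pow_succ', Module.End.mul_apply]
        have h4 : H.mkQ ((N ^ (t + 1)) e) = H.mkQ (c ^ t • N e) :=
          (Submodule.Quotient.eq H).mpr h3
        rw [h4, map_smul, ← hc, smul_smul, ← pow_succ]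
    have hcK : c ^ K • g = 0 := by
      rw [← key K, hK]; simp
    have hc0 : c = 0 := by
      have hcK' : c ^ K = 0 := by
        rcases smul_eq_zero.mp hcK with h | h
        · exact h
        · exact absurd h hg0
      exact IsNilpotent.eq_zero ⟨K, hcK'⟩
    have hNe : N e ∈ H := by
      rw [← Submodule.Quotient.mk_eq_zero]
      show H.mkQ (N e) = 0
      rw [← hc, hc0, zero_smul]
    intro x
    obtain ⟨d, hd⟩ := hgspan (H.mkQ x)
    have hx : x - d • e ∈ H := by
      rw [← Submodule.Quotient.eq]
      show H.mkQ _ = H.mkQ _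
      rw [map_smul, he, hd]
    have hxe : N x = N (x - d • e) + d • N e := by
      rw [map_sub, map_smul]; abel
    rw [hxe]
    exact H.add_mem (hNH _ hx) (H.smul_mem _ hNe)
  have hNpow : ∀ (t : ℕ), ∀ x ∈ H, (N ^ t) x ∈ H := by
    intro t
    induction t with
    | zero => intro x hx; simpa using hx
    | succ t ih =>
      intro x hx
      rw [pow_succ', Module.End.mul_apply]
      exact hNH _ (ih x hx)
  have hW0 : W 0 = ⊤ := hWtop 0 le_rfl
  have hW01 : W ((0 : ℤ) - 1) = H := by rw [(by norm_num : (0 : ℤ) - 1 = -1), hWH]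
  have hWneg2 : W ((-1 : ℤ) - 1) = ⊥ := hWbot _ (by norm_num)
  have hMbot : ∀ i : ℤ, i ≤ a → M i = ⊥ := fun i hi => le_bot_iff.mp (ha ▸ hMono hi)
  -- Step 3: at j = 0, descending on positive side: M(m+1) ≤ M(m) ⊔ H
  have step3 : ∀ m : ℕ, M ((m : ℤ) + 1) ≤ M m ⊔ H := by
    intro m u hu
    have hidx1 : (0 : ℤ) + ((m + 1 : ℕ) : ℤ) = (m : ℤ) + 1 := by push_cast; ring
    have hidx2 : (0 : ℤ) + ((m + 1 : ℕ) : ℤ) - 1 = (m : ℤ) := by push_cast; ring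
    have h1 := (hiso 0 (m + 1) (by omega)).2 u
      ⟨by rw [hidx1]; exact hu, by rw [hW0]; trivial⟩
      (by
        rw [hW01]
        exact Submodule.mem_sup_right
          (by rw [pow_succ', Module.End.mul_apply]; exact hNHall _))
    rw [hidx2, hW0, hW01, inf_top_eq] at h1
    exact h1
  have hM0 : M 0 ⊔ H = ⊤ := by
    have c3 : ∀ t : ℕ, M (t : ℤ) ≤ M 0 ⊔ H := by
      intro t; induction t with
      | zero => simp only [Nat.cast_zero] at *; exact (le_sup_left : M 0 ≤ M 0 ⊔ H)
      | succ t ih =>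
        have hidx : ((t + 1 : ℕ) : ℤ) = (t : ℤ) + 1 := by push_cast; ring
        rw [hidx]
        exact (step3 t).trans (sup_le ih le_sup_right)
    obtain ⟨t, ht⟩ : ∃ t : ℕ, b ≤ (t : ℤ) := ⟨b.toNat, by omega⟩
    exact top_le_iff.mp (hb ▸ (hMono ht).trans (c3 t))
  -- Step 4: at j = -1: M(-2-m) ⊓ H ≤ N(H) ⊔ (M(-3-m) ⊓ H)
  have step4 : ∀ m : ℕ,
      M (-2 - (m : ℤ)) ⊓ H ≤ Submodule.map N H ⊔ (M (-3 - m) ⊓ H) := by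
    intro m v hv
    have hidx1 : (-1 : ℤ) - ((m + 1 : ℕ) : ℤ) = -2 - m := by push_cast; ring
    have hidx2 : (-1 : ℤ) - ((m + 1 : ℕ) : ℤ) - 1 = -3 - m := by push_cast; ring
    obtain ⟨u, hu1, hu2⟩ := (hiso (-1) (m + 1) (by omega)).1 v
      ⟨by rw [hidx1]; exact hv.1, by rw [hWH]; exact hv.2⟩
    rw [hWH] at hu1
    rw [hidx2, hWH, hWneg2, sup_bot_eq] at hu2
    have hNm : (N ^ (m + 1)) u ∈ Submodule.map N H := by
      rw [pow_succ', Module.End.mul_apply]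
      exact ⟨(N ^ m) u, hNpow m u hu1.2, rfl⟩
    have hfin := Submodule.sub_mem (Submodule.map N H ⊔ (M (-3 - (m : ℤ)) ⊓ H))
      (Submodule.mem_sup_left hNm) (Submodule.mem_sup_right hu2)
    simpa using hfin
  have hKey : M (-2) ⊓ H ≤ Submodule.map N H := by
    have c4 : ∀ t : ℕ, M (-2) ⊓ H ≤ Submodule.map N H ⊔ (M (-2 - t) ⊓ H) := by
      intro t; induction t with
      | zero => simpa using (le_sup_right : M (-2) ⊓ H ≤ _ ⊔ (M (-2) ⊓ H))
      | succ t ih =>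
        have hidx : (-2 : ℤ) - ((t + 1 : ℕ) : ℤ) = -3 - t := by push_cast; ring
        rw [hidx]
        exact ih.trans (sup_le le_sup_left (step4 t))
    obtain ⟨t, ht⟩ : ∃ t : ℕ, -2 - (t : ℤ) ≤ a := ⟨(-2 - a).toNat, by omega⟩
    exact (c4 t).trans (sup_le le_rfl (by rw [hMbot _ ht, bot_inf_eq]; exact bot_le))
  -- conclude
  apply le_antisymm
  · rw [← hM0, Submodule.map_sup]
    refine sup_le ?_ le_rfl
    rintro _ ⟨x, hx, rfl⟩
    refine hKey ⟨?_, hNHall x⟩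
    have h02 := hN2 0 x hx
    norm_num at h02
    exact h02
  · exact Submodule.map_mono le_top
end

section
/- Let V be a finite-dimensional complex normed vector space, N a nilpotent endomorphism of V, a > 0, and (g_k)_{k≥1} a sequence in End(V) such that (ad N)^{k+1}(g_k) = 0 for every k ≥ 1 and the series Σ_{k≥1} ‖g_k‖ y^{−k} converges for every y > a. Define g(y) = 1 + Σ_{k≥1} g_k y^{−k} ∈ End(V) for y > a. Then the limit lim_{y→∞} e^{−iyN} g(y) e^{iyN} exists and equals 1 + Σ_{k≥1} ((−i)^k / k!) (ad N)^k (g_k), the latter series being absolutely convergent. -/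
open NormedSpace ContinuousLinearMap Finset

namespace ZL16

variable {A : Type*} [NormedRing A] [NormedAlgebra ℂ A] [CompleteSpace A]

/-- Left multiplication as a ring hom into continuous linear maps. -/
noncomputable def lhom : A →+* (A →L[ℂ] A) where
  toFun x := ContinuousLinearMap.mul ℂ A x
  map_one' := by ext z; simp
  map_mul' x y := by ext z; simp [mul_assoc]
  map_zero' := by ext z; simp
  map_add' x y := by ext z; simp [add_mul]

/-- Right multiplication (from the opposite algebra) as a ring hom. -/
noncomputable def rhom : Aᵐᵒᵖ →+* (A →L[ℂ] A) where
  toFun x := (ContinuousLinearMap.mul ℂ A).flip x.unop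
  map_one' := by ext z; simp
  map_mul' x y := by ext z; simp [mul_assoc]
  map_zero' := by ext z; simp
  map_add' x y := by ext z; simp [mul_add]

lemma lhom_cont : Continuous (lhom (A := A)) := (ContinuousLinearMap.mul ℂ A).continuous

lemma rhom_cont : Continuous (rhom (A := A)) :=
  (ContinuousLinearMap.mul ℂ A).flip.continuous.comp MulOpposite.continuous_unop

noncomputable def ad (N : A) : A →L[ℂ] A :=
  ContinuousLinearMap.mul ℂ A N - (ContinuousLinearMap.mul ℂ A).flip N

lemma ad_apply (N X : A) : ad N X = N * X - X * N := rfl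

lemma ad_pow_apply (N : A) (m : ℕ) (X : A) :
    (ad N ^ m) X = (fun Y : A => N * Y - Y * N)^[m] X := by
  induction m generalizing X with
  | zero => simp
  | succ m ih =>
    rw [pow_succ, mul_apply_eq_comp, Function.iterate_succ_apply]
    exact ih _

lemma smul_ad_pow_apply (N : A) (s : ℂ) (m : ℕ) (X : A) :
    ((s • ad N) ^ m) X = s ^ m • (fun Y : A => N * Y - Y * N)^[m] X := by
  induction m with
  | zero => simp
  | succ m ih =>
    rw [pow_succ', mul_apply_eq_comp, ih, ContinuousLinearMap.map_smul,
      Function.iterate_succ_apply', pow_succ']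
    simp only [smul_apply, ad_apply, smul_smul]
    ring_nf

lemma conj_exp (N : A) (s : ℂ) (X : A) (n : ℕ)
    (hX : (fun Y : A => N * Y - Y * N)^[n] X = 0) :
    exp (s • N) * X * exp (-(s • N)) =
      ∑ m ∈ Finset.range n, (((m.factorial : ℂ))⁻¹ * s ^ m) • (fun Y : A => N * Y - Y * N)^[m] X := by
  let +nondep : NormedAlgebra ℚ A := .restrictScalars ℚ ℂ A
  let +nondep : NormedAlgebra ℚ (A →L[ℂ] A) := .restrictScalars ℚ ℂ (A →L[ℂ] A)
  have hcomm : Commute (s • ContinuousLinearMap.mul ℂ A N)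
      (-(s • (ContinuousLinearMap.mul ℂ A).flip N)) := by
    refine Commute.neg_right ?_
    refine (Commute.smul_left ?_ s).smul_right s
    ext z; simp [mul_assoc]
  have h1 : exp (s • N) * X * exp (-(s • N)) =
      (lhom (exp (s • N)) * rhom (MulOpposite.op (exp (-(s • N))))) X := by
    simp [lhom, rhom, mul_apply_eq_comp, mul_assoc]
  have h2 : lhom (exp (s • N)) = exp (s • ContinuousLinearMap.mul ℂ A N) := by
    rw [map_exp lhom lhom_cont]
    congr 1
    ext z; simp [lhom, smul_mul_assoc]
  have h3 : rhom (MulOpposite.op (exp (-(s • N)))) =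
      exp (-(s • (ContinuousLinearMap.mul ℂ A).flip N)) := by
    have hme := map_exp (rhom (A := A)) rhom_cont (MulOpposite.op (-(s • N)))
    rw [← exp_op, hme]
    congr 1
    ext z; simp [rhom, mul_smul_comm]
  rw [h1, h2, h3, ← exp_add_of_commute hcomm]
  have h4 : s • ContinuousLinearMap.mul ℂ A N +
      -(s • (ContinuousLinearMap.mul ℂ A).flip N) = s • ad N := by
    rw [ad, smul_sub, sub_eq_add_neg]
  rw [h4, exp_eq_tsum ℂ]
  have hs : Summable fun m : ℕ => ((m.factorial :ℂ))⁻¹ • (s • ad N) ^ m :=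
    expSeries_summable' (𝕂 := ℂ) (s • ad N)
  have h5 : (∑' m : ℕ, ((m.factorial : ℂ))⁻¹ • (s • ad N) ^ m) X
      = ∑' m : ℕ, (((m.factorial : ℂ))⁻¹ * s ^ m) • (fun Y : A => N * Y - Y * N)^[m] X := by
    have h5' := ContinuousLinearMap.map_tsum (ContinuousLinearMap.apply ℂ A X) hs
    simp only [ContinuousLinearMap.apply_apply] at h5'
    rw [h5']
    refine tsum_congr fun m => ?_
    rw [smul_apply, smul_ad_pow_apply, smul_smul]
  rw [h5]
  refine tsum_eq_sum fun m hm => ?_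
  have hmn : n ≤ m := by simpa using hm
  have : (fun Y : A => N * Y - Y * N)^[m] X = 0 := by
    rw [← Nat.sub_add_cancel hmn, Function.iterate_add_apply, hX]
    exact Function.iterate_fixed (by simp) _
  rw [this, smul_zero]

end ZL16

set_option maxHeartbeats 2000000 in
/-- let `N` be a nilpotent endomorphism of a finite-dimensional complex
normed space and `g(y) = 1 + Σ_{k ≥ 1} g_k y^{-k}` with `(ad N)^{k+1}(g_k) = 0` and
`Σ ‖g_k‖ y^{-k}` convergent for `y > a`.  Then `e^{-iyN} g(y) e^{iyN}` converges as
`y → ∞` to `1 + Σ_{k ≥ 1} ((-i)^k / k!) (ad N)^k (g_k)`, the latter series being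
absolutely convergent.  (Here `g k` denotes `g_{k+1}`.) -/
theorem zero_loci_stmt16 {V : Type*} [NormedAddCommGroup V] [NormedSpace ℂ V]
    [FiniteDimensional ℂ V]
    (N : V →L[ℂ] V) (hnil : ∃ n : ℕ, N ^ n = 0) (a : ℝ) (ha : 0 < a)
    (g : ℕ → V →L[ℂ] V)
    (hker : ∀ k : ℕ, (fun X : V →L[ℂ] V => N * X - X * N)^[k + 2] (g k) = 0)
    (hsum : ∀ y : ℝ, a < y → Summable fun k : ℕ => ‖g k‖ * (y ^ (k + 1))⁻¹) :
    (Summable fun k : ℕ =>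
      ‖((-Complex.I) ^ (k + 1) * (((k + 1).factorial : ℂ))⁻¹) •
        (fun X : V →L[ℂ] V => N * X - X * N)^[k + 1] (g k)‖) ∧
    Filter.Tendsto
      (fun y : ℝ =>
        NormedSpace.exp ((-(y : ℂ) * Complex.I) • N) *
          (1 + ∑' k : ℕ, ((y : ℂ) ^ (k + 1))⁻¹ • g k) *
          NormedSpace.exp (((y : ℂ) * Complex.I) • N))
      Filter.atTop
      (nhds (1 + ∑' k : ℕ,
        ((-Complex.I) ^ (k + 1) * (((k + 1).factorial : ℂ))⁻¹) •
          (fun X : V →L[ℂ] V => N * X - X * N)^[k + 1] (g k))) := by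
  set D : (V →L[ℂ] V) → (V →L[ℂ] V) := fun X => N * X - X * N with hDdef
  set l : ℕ → (V →L[ℂ] V) := fun k =>
    ((-Complex.I) ^ (k + 1) * (((k + 1).factorial : ℂ))⁻¹) • D^[k + 1] (g k) with hl
  set c : ℝ := ‖ZL16.ad N‖ with hc
  have hcnn : 0 ≤ c := norm_nonneg _
  set y0 : ℝ := a + 1 with hy0
  have hy0a : a < y0 := lt_add_one a
  have hy0pos : 0 < y0 := by positivity
  set b : ℕ → ℝ := fun k => ‖g k‖ * (y0 ^ (k + 1))⁻¹ with hbdef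
  have hb : Summable b := hsum y0 hy0a
  have hbnn : ∀ k, 0 ≤ b k := fun k => by positivity
  set K : ℝ := Real.exp (c * y0) with hK
  -- iterated commutator norm bound
  have hDit : ∀ (m : ℕ) (X : V →L[ℂ] V), ‖D^[m] X‖ ≤ c ^ m * ‖X‖ := by
    intro m
    induction m with
    | zero => intro X; simp
    | succ m ih =>
      intro X
      rw [Function.iterate_succ_apply']
      have h1 : ‖D (D^[m] X)‖ ≤ c * ‖D^[m] X‖ := by
        have := (ZL16.ad N).le_opNorm (D^[m] X)
        simpa [ZL16.ad_apply] using this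
      calc ‖D (D^[m] X)‖ ≤ c * ‖D^[m] X‖ := h1
        _ ≤ c * (c ^ m * ‖X‖) := by
            exact mul_le_mul_of_nonneg_left (ih X) hcnn
        _ = c ^ (m + 1) * ‖X‖ := by ring
  -- exp-series term bound
  have hKm : ∀ m : ℕ, (c * y0) ^ m / m.factorial ≤ K := by
    intro m
    have h1 : (c * y0) ^ m / m.factorial ≤
        ∑ i ∈ Finset.range (m + 1), (c * y0) ^ i / i.factorial := by
      refine Finset.single_le_sum (f := fun i => (c * y0) ^ i / i.factorial) ?_ ?_
      · intro i _; positivity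
      · exact Finset.self_mem_range_succ m
    exact h1.trans (Real.sum_le_exp_of_nonneg (by positivity) (m + 1))
  -- norm bound for the limit terms
  have hlb : ∀ k, ‖l k‖ ≤ K * b k := by
    intro k
    have hy0ne : (y0 : ℝ) ^ (k + 1) ≠ 0 := by positivity
    have h1 : ‖l k‖ ≤ (((k + 1).factorial : ℝ))⁻¹ * (c ^ (k + 1) * ‖g k‖) := by
      have hns : ‖l k‖ =
          ‖(-Complex.I) ^ (k + 1) * (((k + 1).factorial : ℂ))⁻¹‖ * ‖D^[k + 1] (g k)‖ :=
        norm_smul ((-Complex.I) ^ (k + 1) * (((k + 1).factorial : ℂ))⁻¹) (D^[k + 1] (g k))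
      have hco : ‖(-Complex.I) ^ (k + 1) * (((k + 1).factorial : ℂ))⁻¹‖ =
          (((k + 1).factorial : ℝ))⁻¹ := by
        simp
      rw [hns, hco]
      exact mul_le_mul_of_nonneg_left (hDit (k + 1) (g k)) (by positivity)
    have h2 : (((k + 1).factorial : ℝ))⁻¹ * (c ^ (k + 1) * ‖g k‖) =
        ((c * y0) ^ (k + 1) / (k + 1).factorial) * b k := by
      simp only [hbdef]
      rw [mul_pow]
      field_simp
    rw [h2] at h1
    exact h1.trans (mul_le_mul_of_nonneg_right (hKm (k + 1)) (hbnn k))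
  have part1 : Summable fun k => ‖l k‖ :=
    Summable.of_nonneg_of_le (fun k => norm_nonneg _) hlb (hb.mul_left K)
  have hlsum : Summable l := part1.of_norm
  refine ⟨part1, ?_⟩
  -- the error terms
  set E : ℝ → ℕ → (V →L[ℂ] V) := fun y k =>
    ∑ m ∈ Finset.range (k + 1),
      (((y : ℂ) ^ (k + 1))⁻¹ * (((m.factorial : ℂ))⁻¹ * (-(y : ℂ) * Complex.I) ^ m)) •
        D^[m] (g k) with hEdef
  -- error bound
  have hE : ∀ y : ℝ, y0 ≤ y → ∀ k, ‖E y k‖ ≤ (y0 * K / y) * b k := by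
    intro y hy k
    have hypos : 0 < y := lt_of_lt_of_le hy0pos hy
    have hterm : ∀ m ∈ Finset.range (k + 1),
        ‖(((y : ℂ) ^ (k + 1))⁻¹ * (((m.factorial : ℂ))⁻¹ * (-(y : ℂ) * Complex.I) ^ m)) •
          D^[m] (g k)‖ ≤ (y0 / y) * ((c * y0) ^ m / m.factorial) * b k := by
      intro m hm
      have hmk : m ≤ k := by
        have := Finset.mem_range.mp hm; omega
      have hnc : ‖(((y : ℂ) ^ (k + 1))⁻¹ *
          (((m.factorial : ℂ))⁻¹ * (-(y : ℂ) * Complex.I) ^ m))‖ =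
          (y ^ (k + 1))⁻¹ * (((m.factorial : ℝ))⁻¹ * y ^ m) := by
        simp [norm_smul, abs_of_pos hypos]
      have hkey : (y ^ (k + 1))⁻¹ * y ^ m ≤ (y0 ^ (k + 1))⁻¹ * y0 ^ m * (y0 / y) := by
        obtain ⟨j, hj⟩ : ∃ j, k + 1 = m + (j + 1) := ⟨k - m, by omega⟩
        have e1 : (y ^ (k + 1))⁻¹ * y ^ m = (y ^ (j + 1))⁻¹ := by
          rw [hj, pow_add]
          field_simp
        have e2 : (y0 ^ (k + 1))⁻¹ * y0 ^ m * (y0 / y) = (y0 ^ j * y)⁻¹ := by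
          rw [hj, pow_add]
          field_simp
          ring
        rw [e1, e2]
        have h3 : y0 ^ j * y ≤ y ^ (j + 1) := by
          rw [pow_succ]
          exact mul_le_mul_of_nonneg_right (pow_le_pow_left₀ hy0pos.le hy j) hypos.le
        exact inv_anti₀ (by positivity) h3
      calc ‖(((y : ℂ) ^ (k + 1))⁻¹ *
            (((m.factorial : ℂ))⁻¹ * (-(y : ℂ) * Complex.I) ^ m)) • D^[m] (g k)‖
          = ‖((y : ℂ) ^ (k + 1))⁻¹ * (((m.factorial : ℂ))⁻¹ * (-(y : ℂ) * Complex.I) ^ m)‖ *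
              ‖D^[m] (g k)‖ :=
            norm_smul (((y : ℂ) ^ (k + 1))⁻¹ * (((m.factorial : ℂ))⁻¹ * (-(y : ℂ) * Complex.I) ^ m))
              (D^[m] (g k))
        _ = ((y ^ (k + 1))⁻¹ * (((m.factorial : ℝ))⁻¹ * y ^ m)) * ‖D^[m] (g k)‖ := by
            rw [hnc]
        _ ≤ ((y ^ (k + 1))⁻¹ * (((m.factorial : ℝ))⁻¹ * y ^ m)) * (c ^ m * ‖g k‖) := by
            refine mul_le_mul_of_nonneg_left (hDit m (g k)) (by positivity)
        _ = ((y ^ (k + 1))⁻¹ * y ^ m) * (((m.factorial : ℝ))⁻¹ * (c ^ m * ‖g k‖)) := by ring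
        _ ≤ ((y0 ^ (k + 1))⁻¹ * y0 ^ m * (y0 / y)) *
              (((m.factorial : ℝ))⁻¹ * (c ^ m * ‖g k‖)) := by
            refine mul_le_mul_of_nonneg_right hkey (by positivity)
        _ = (y0 / y) * ((c * y0) ^ m / m.factorial) * b k := by
            simp only [hbdef]
            rw [mul_pow]
            field_simp
    calc ‖E y k‖ ≤ ∑ m ∈ Finset.range (k + 1),
          ‖(((y : ℂ) ^ (k + 1))⁻¹ * (((m.factorial : ℂ))⁻¹ * (-(y : ℂ) * Complex.I) ^ m)) •
            D^[m] (g k)‖ := norm_sum_le _ _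
      _ ≤ ∑ m ∈ Finset.range (k + 1), (y0 / y) * ((c * y0) ^ m / m.factorial) * b k :=
          Finset.sum_le_sum hterm
      _ = (y0 / y) * b k * ∑ m ∈ Finset.range (k + 1), (c * y0) ^ m / m.factorial := by
          rw [Finset.mul_sum]; exact Finset.sum_congr rfl fun m _ => by ring
      _ ≤ (y0 / y) * b k * K := by
          refine mul_le_mul_of_nonneg_left
            (Real.sum_le_exp_of_nonneg (by positivity) (k + 1)) (by positivity)
      _ = (y0 * K / y) * b k := by ring
  -- decomposition of the conjugated series
  have hdecomp : ∀ y : ℝ, y0 ≤ y →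
      NormedSpace.exp ((-(y : ℂ) * Complex.I) • N) *
        (1 + ∑' k : ℕ, ((y : ℂ) ^ (k + 1))⁻¹ • g k) *
        NormedSpace.exp (((y : ℂ) * Complex.I) • N) = 1 + ∑' k : ℕ, (l k + E y k) := by
    intro y hy
    have hypos : 0 < y := lt_of_lt_of_le hy0pos hy
    have hyne : (y : ℂ) ≠ 0 := by
      exact_mod_cast Complex.ofReal_ne_zero.mpr hypos.ne'
    set s : ℂ := -(y : ℂ) * Complex.I with hs
    have hvs : ((y : ℂ) * Complex.I) • N = -(s • N) := by
      rw [← neg_smul]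
      congr 1
      rw [hs]; ring
    set u : V →L[ℂ] V := NormedSpace.exp (s • N) with hu
    set v : V →L[ℂ] V := NormedSpace.exp (-(s • N)) with hv
    let +nondep : NormedAlgebra ℚ (V →L[ℂ] V) := .restrictScalars ℚ ℂ (V →L[ℂ] V)
    have huv : u * v = 1 := by
      rw [hu, hv, ← NormedSpace.exp_add_of_commute ((Commute.refl (s • N)).neg_right)]
      simp
    set t : ℕ → (V →L[ℂ] V) := fun k => ((y : ℂ) ^ (k + 1))⁻¹ • g k with ht
    have hts : Summable t := by
      refine Summable.of_norm ?_
      have : (fun k => ‖t k‖) = fun k => ‖g k‖ * (y ^ (k + 1))⁻¹ := by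
        funext k
        have hns : ‖t k‖ = ‖((y : ℂ) ^ (k + 1))⁻¹‖ * ‖g k‖ :=
          norm_smul (((y : ℂ) ^ (k + 1))⁻¹) (g k)
        rw [hns]
        have : ‖((y : ℂ) ^ (k + 1))⁻¹‖ = (y ^ (k + 1))⁻¹ := by
          simp [abs_of_pos hypos]
        rw [this, mul_comm]
      rw [this]
      exact hsum y (lt_of_lt_of_le hy0a hy)
    set C : (V →L[ℂ] V) →L[ℂ] (V →L[ℂ] V) :=
      ((ContinuousLinearMap.mul ℂ (V →L[ℂ] V)) u).comp
        (((ContinuousLinearMap.mul ℂ (V →L[ℂ] V)).flip) v) with hC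
    have hCapp : ∀ X : V →L[ℂ] V, C X = u * X * v := by
      intro X
      simp [hC, ContinuousLinearMap.mul_apply', ContinuousLinearMap.flip_apply, mul_assoc]
    have hCt : ∀ k, C (t k) = l k + E y k := by
      intro k
      have hconj := ZL16.conj_exp N s (g k) (k + 2) (hker k)
      have : C (t k) = ((y : ℂ) ^ (k + 1))⁻¹ •
          ∑ m ∈ Finset.range (k + 2),
            (((m.factorial : ℂ))⁻¹ * s ^ m) • D^[m] (g k) := by
        simp only [ht]
        rw [map_smul, hCapp, ← hconj, hu, hv]
      rw [this, Finset.sum_range_succ, smul_add, Finset.smul_sum]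
      have hcoef : ((y : ℂ) ^ (k + 1))⁻¹ *
          ((((k + 1).factorial : ℂ))⁻¹ * s ^ (k + 1)) =
          (-Complex.I) ^ (k + 1) * (((k + 1).factorial : ℂ))⁻¹ := by
        have hsp : s ^ (k + 1) = (y : ℂ) ^ (k + 1) * (-Complex.I) ^ (k + 1) := by
          rw [show s = (y : ℂ) * -Complex.I by rw [hs]; ring, mul_pow]
        rw [hsp]
        have : ((y : ℂ) ^ (k + 1)) ≠ 0 := pow_ne_zero _ hyne
        field_simp
      rw [add_comm]
      congr 1
      · simp only [hl]
        rw [smul_smul, hcoef]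
      · simp only [hEdef]
        exact Finset.sum_congr rfl fun m _ => by rw [smul_smul]
    have hTsum : u * (∑' k, t k) * v = ∑' k, (l k + E y k) := by
      have h1 : u * (∑' k, t k) * v = C (∑' k, t k) := (hCapp _).symm
      rw [h1, ContinuousLinearMap.map_tsum C hts]
      exact tsum_congr hCt
    rw [hvs, ← hv]
    calc u * (1 + ∑' k, t k) * v = u * v + u * (∑' k, t k) * v := by
          rw [mul_add, mul_one, add_mul]
      _ = 1 + ∑' k, (l k + E y k) := by rw [huv, hTsum]
  -- summability of the error terms
  have hEs : ∀ y : ℝ, y0 ≤ y → Summable (E y) := by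
    intro y hy
    refine Summable.of_norm <| Summable.of_nonneg_of_le
      (fun k => norm_nonneg _) (hE y hy) (hb.mul_left _)
  -- final squeeze
  set S : ℝ := ∑' k, b k with hS
  rw [← tendsto_sub_nhds_zero_iff]
  have hbound : ∀ y : ℝ, y0 ≤ y →
      ‖NormedSpace.exp ((-(y : ℂ) * Complex.I) • N) *
        (1 + ∑' k : ℕ, ((y : ℂ) ^ (k + 1))⁻¹ • g k) *
        NormedSpace.exp (((y : ℂ) * Complex.I) • N) - (1 + ∑' k, l k)‖ ≤
        (y0 * K / y) * S := by
    intro y hy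
    have hEnorms : Summable fun k => ‖E y k‖ :=
      Summable.of_nonneg_of_le (fun k => norm_nonneg _) (hE y hy) (hb.mul_left _)
    have hdiff : NormedSpace.exp ((-(y : ℂ) * Complex.I) • N) *
        (1 + ∑' k : ℕ, ((y : ℂ) ^ (k + 1))⁻¹ • g k) *
        NormedSpace.exp (((y : ℂ) * Complex.I) • N) - (1 + ∑' k, l k) = ∑' k, E y k := by
      rw [hdecomp y hy, Summable.tsum_add hlsum (hEs y hy)]
      abel
    rw [hdiff]
    calc ‖∑' k, E y k‖ ≤ ∑' k, ‖E y k‖ := norm_tsum_le_tsum_norm hEnorms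
      _ ≤ ∑' k, (y0 * K / y) * b k :=
          Summable.tsum_le_tsum (hE y hy) hEnorms (hb.mul_left _)
      _ = (y0 * K / y) * S := by rw [tsum_mul_left]
  refine squeeze_zero_norm' (a := fun y : ℝ => (y0 * K / y) * S) ?_ ?_
  · exact (Filter.eventually_ge_atTop y0).mono fun y hy => hbound y hy
  · have h1 : Filter.Tendsto (fun y : ℝ => (y0 * K / y) * S) Filter.atTop (nhds 0) := by
      have h2 : (fun y : ℝ => (y0 * K / y) * S) = fun y => (y0 * K) * y⁻¹ * S := by
        funext y; ring
      rw [h2]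
      simpa using (tendsto_inv_atTop_zero.const_mul (y0 * K)).mul_const S
    exact h1
end
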